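/- arXiv:2405.09741 — 4 statements merged into one kernel-verified Lean document; each statement's English description precedes it below -/
import Mathlib

section
/- Let c_1 := P(X_0^* ≥ 2) > 0. For every p ∈ [1 − c_1/4, 1], every integer k ≥ 1, and every integer n ≥ ⌊(log k + log((4+c_1)/c_1))/log m⌋ + 1, one has P( Σ_{i=1}^{m^n − k} X_{0,i} ≤ m^n ) ≤ exp( −(c_1^2/32)·(m^n − k) ), where X_{0,i}, i ≥ 1, are independent copies of X_0. -/
noncomputable section

lemma exp_neg_le_quad {x : ℝ} (hx : 0 ≤ x) : Real.exp (-x) ≤ 1 - x + x ^ 2 / 2 := by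
  have key : 1 ≤ Real.exp x * (1 - x + x ^ 2 / 2) := by
    set f : ℝ → ℝ := fun z => Real.exp z * (1 - z + z ^ 2 / 2) with hf
    have hder : ∀ z : ℝ, HasDerivAt f (Real.exp z * (z ^ 2 / 2)) z := by
      intro z
      have h1 : HasDerivAt (fun z : ℝ => 1 - z + z ^ 2 / 2) (0 - 1 + (2 : ℕ) * z ^ 1 / 2) z :=
        ((hasDerivAt_const z (1 : ℝ)).sub (hasDerivAt_id z)).add ((hasDerivAt_pow 2 z).div_const 2)
      have h2 : HasDerivAt f _ z := (Real.hasDerivAt_exp z).mul h1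
      convert h2 using 1
      push_cast; ring
    have mono : MonotoneOn f (Set.Ici (0 : ℝ)) := by
      apply monotoneOn_of_deriv_nonneg (convex_Ici 0)
      · exact (Real.continuous_exp.mul (by continuity)).continuousOn
      · intro z _; exact (hder z).differentiableAt.differentiableWithinAt
      · intro z _; rw [(hder z).deriv]; positivity
    have h0 : f 0 = 1 := by simp [hf]
    have hm := mono (Set.mem_Ici.2 le_rfl) (Set.mem_Ici.2 hx) hx
    rw [h0] at hm; exact hm
  have hepos : (0 : ℝ) < Real.exp x := Real.exp_pos x
  rw [Real.exp_neg, inv_le_iff_one_le_mul₀ hepos]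
  nlinarith [key]

lemma exp_neg_ge_cubic {x : ℝ} (hx : 0 ≤ x) :
    1 - x + x ^ 2 / 2 - x ^ 3 / 6 ≤ Real.exp (-x) := by
  have key : Real.exp x * (1 - x + x ^ 2 / 2 - x ^ 3 / 6) ≤ 1 := by
    set f : ℝ → ℝ := fun z => Real.exp z * (1 - z + z ^ 2 / 2 - z ^ 3 / 6) with hf
    have hder : ∀ z : ℝ, HasDerivAt f (Real.exp z * (-(z ^ 3) / 6)) z := by
      intro z
      have h1 : HasDerivAt (fun z : ℝ => 1 - z + z ^ 2 / 2 - z ^ 3 / 6)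
          (0 - 1 + (2 : ℕ) * z ^ 1 / 2 - (3 : ℕ) * z ^ 2 / 6) z :=
        (((hasDerivAt_const z (1 : ℝ)).sub (hasDerivAt_id z)).add
          ((hasDerivAt_pow 2 z).div_const 2)).sub ((hasDerivAt_pow 3 z).div_const 6)
      have h2 : HasDerivAt f _ z := (Real.hasDerivAt_exp z).mul h1
      convert h2 using 1
      push_cast; ring
    have anti : AntitoneOn f (Set.Ici (0 : ℝ)) := by
      apply antitoneOn_of_deriv_nonpos (convex_Ici 0)
      · exact (Real.continuous_exp.mul (by continuity)).continuousOn
      · intro z _; exact (hder z).differentiableAt.differentiableWithinAt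
      · intro z hz
        rw [(hder z).deriv]
        have hz' : (0 : ℝ) ≤ z := le_of_lt (by simpa using hz)
        apply mul_nonpos_of_nonneg_of_nonpos (Real.exp_nonneg z)
        have : (0:ℝ) ≤ z ^ 3 := by positivity
        linarith
    have h0 : f 0 = 1 := by simp [hf]
    have hm := anti (Set.mem_Ici.2 le_rfl) (Set.mem_Ici.2 hx) hx
    rw [h0] at hm; exact hm
  have hepos : (0 : ℝ) < Real.exp x := Real.exp_pos x
  rw [Real.exp_neg]
  have h2 := mul_le_mul_of_nonneg_left key (inv_nonneg.2 hepos.le)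
  calc 1 - x + x ^ 2 / 2 - x ^ 3 / 6
      = (Real.exp x)⁻¹ * (Real.exp x * (1 - x + x ^ 2 / 2 - x ^ 3 / 6)) := by
        field_simp
    _ ≤ (Real.exp x)⁻¹ * 1 := h2
    _ = (Real.exp x)⁻¹ := mul_one _

lemma core_poly {c pp a : ℝ} (hc0 : 0 < c) (hc1 : c ≤ 1) (hp1 : 1 - c / 4 ≤ pp)
    (hp2 : pp ≤ 1) (ha1 : 1 - c / 4 ≤ a) (ha2 : a ≤ 1 - c / 4 + c ^ 2 / 32) :
    (c / 4 + 3 * c ^ 2 / 32) - (c / 4 + 3 * c ^ 2 / 32) ^ 2 / 2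
      + (c / 4 + 3 * c ^ 2 / 32) ^ 3 / 6 ≤ pp * (1 - (1 - c) * a - c * a ^ 2) := by
  set A : ℝ := 1 - c / 4 + c ^ 2 / 32 with hA
  have ha0 : 0 ≤ a := by nlinarith
  have hA0 : 0 ≤ A := by nlinarith
  have hv : 1 - (1 - c) * A - c * A ^ 2 ≤ 1 - (1 - c) * a - c * a ^ 2 := by
    nlinarith [mul_nonneg (sub_nonneg.2 hc1) (sub_nonneg.2 ha2),
      mul_nonneg (mul_nonneg hc0.le (sub_nonneg.2 ha2)) (add_nonneg ha0 hA0)]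
  have hvA : 0 ≤ 1 - (1 - c) * A - c * A ^ 2 := by
    rw [hA]; nlinarith [sq_nonneg c, sq_nonneg (1 - c), mul_nonneg (sq_nonneg c) hc0.le,
      mul_nonneg (mul_nonneg (sq_nonneg c) hc0.le) hc0.le,
      mul_nonneg (sq_nonneg c) (sub_nonneg.2 hc1)]
  have hp0 : 0 ≤ 1 - c / 4 := by linarith
  have hu : (1 - c / 4) * (1 - (1 - c) * A - c * A ^ 2) ≤ pp * (1 - (1 - c) * a - c * a ^ 2) :=
    mul_le_mul hp1 hv hvA (by linarith)
  have hfin : (c / 4 + 3 * c ^ 2 / 32) - (c / 4 + 3 * c ^ 2 / 32) ^ 2 / 2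
      + (c / 4 + 3 * c ^ 2 / 32) ^ 3 / 6 ≤ (1 - c / 4) * (1 - (1 - c) * A - c * A ^ 2) := by
    rw [hA]
    nlinarith [mul_nonneg (sq_nonneg c) (sub_nonneg.2 hc1),
      mul_nonneg (sq_nonneg c) (sq_nonneg (1 - c)),
      mul_nonneg (mul_nonneg (sq_nonneg c) (sub_nonneg.2 hc1)) (sq_nonneg (1 - c)),
      mul_nonneg (sq_nonneg c) (sq_nonneg ((1 - c) ^ 2)), sq_nonneg c]
  linarith

lemma core_exp {c pp : ℝ} (hc0 : 0 < c) (hc1 : c ≤ 1) (hp1 : 1 - c / 4 ≤ pp) (hp2 : pp ≤ 1) :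
    Real.exp (c / 4 * (1 + c / 4)) *
      (1 - pp + pp * (1 - c) * Real.exp (-(c / 4)) + pp * c * Real.exp (-(c / 2))) ≤
    Real.exp (-(c ^ 2 / 32)) := by
  set a : ℝ := Real.exp (-(c / 4)) with ha
  have hc4 : (0:ℝ) ≤ c / 4 := by linarith
  have haa : Real.exp (-(c / 2)) = a ^ 2 := by
    rw [ha, sq, ← Real.exp_add]; congr 1; ring
  have ha1 : 1 - c / 4 ≤ a := by
    have := Real.add_one_le_exp (-(c / 4)); linarith
  have ha2 : a ≤ 1 - c / 4 + c ^ 2 / 32 := by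
    have h := exp_neg_le_quad hc4
    calc a ≤ 1 - c / 4 + (c / 4) ^ 2 / 2 := h
      _ = 1 - c / 4 + c ^ 2 / 32 := by ring
  set D : ℝ := c / 4 + 3 * c ^ 2 / 32 with hD
  have hD0 : 0 ≤ D := by rw [hD]; positivity
  have h1 : 1 - pp + pp * (1 - c) * a + pp * c * a ^ 2 ≤ 1 - D + D ^ 2 / 2 - D ^ 3 / 6 := by
    have h := core_poly hc0 hc1 hp1 hp2 ha1 ha2
    rw [← hD] at h
    have hrw : 1 - pp + pp * (1 - c) * a + pp * c * a ^ 2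
        = 1 - pp * (1 - (1 - c) * a - c * a ^ 2) := by ring
    rw [hrw]
    linarith
  have h2 : 1 - D + D ^ 2 / 2 - D ^ 3 / 6 ≤ Real.exp (-D) := exp_neg_ge_cubic hD0
  rw [haa]
  calc Real.exp (c / 4 * (1 + c / 4)) * (1 - pp + pp * (1 - c) * a + pp * c * a ^ 2)
      ≤ Real.exp (c / 4 * (1 + c / 4)) * Real.exp (-D) :=
        mul_le_mul_of_nonneg_left (h1.trans h2) (Real.exp_nonneg _)
    _ = Real.exp (-(c ^ 2 / 32)) := by
        rw [← Real.exp_add]; congr 1; rw [hD]; ring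

/-- The mass function of `X_0`, namely `(1 - p)·δ_0 + p·ν`. -/
def mix (ν : ℕ → ℝ) (p : ℝ) : ℕ → ℝ :=
  fun k => (1 - p) * (if k = 0 then 1 else 0) + p * ν k

/-- `sumLaw μ N` is the mass function of the sum of `N` independent copies of a
random variable with mass function `μ` (the `N`-fold convolution of `μ`). -/
def sumLaw (μ : ℕ → ℝ) : ℕ → ℕ → ℝ
  | 0, j => if j = 0 then 1 else 0
  | N + 1, j => ∑ a ∈ Finset.range (j + 1), μ a * sumLaw μ N (j - a)

lemma sumLaw_nonneg {μ : ℕ → ℝ} (h : ∀ a, 0 ≤ μ a) : ∀ N j, 0 ≤ sumLaw μ N j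
  | 0, j => by simp only [sumLaw]; split <;> norm_num
  | N + 1, j => by
    simp only [sumLaw]
    exact Finset.sum_nonneg fun a _ => mul_nonneg (h a) (sumLaw_nonneg h N _)

lemma sumLaw_tsum {μ : ℕ → ℝ} (hnn : ∀ a, 0 ≤ μ a) (hs : Summable μ) {x : ℝ}
    (hx0 : 0 ≤ x) (hx1 : x ≤ 1) (N : ℕ) :
    Summable (fun j => sumLaw μ N j * x ^ j) ∧
      ∑' j, sumLaw μ N j * x ^ j = (∑' a, μ a * x ^ a) ^ N := by
  induction N with
  | zero =>
    have hfun : ∀ j : ℕ, sumLaw μ 0 j * x ^ j = if j = 0 then 1 else 0 := by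
      intro j
      simp only [sumLaw]
      by_cases hj : j = 0
      · simp [hj]
      · simp [hj]
    constructor
    · apply summable_of_ne_finset_zero (s := ({0} : Finset ℕ))
      intro j hj
      rw [hfun j, if_neg (by simpa using hj)]
    · rw [tsum_congr hfun, tsum_ite_eq, pow_zero]
  | succ N ih =>
    have hμx_nn : ∀ a, 0 ≤ μ a * x ^ a := fun a => mul_nonneg (hnn a) (pow_nonneg hx0 a)
    have hμx : Summable (fun a => μ a * x ^ a) := by
      apply Summable.of_nonneg_of_le hμx_nn (fun a => ?_) hs
      calc μ a * x ^ a ≤ μ a * 1 :=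
        mul_le_mul_of_nonneg_left (pow_le_one₀ hx0 hx1) (hnn a)
      _ = μ a := mul_one _
    have hf : Summable (fun a => ‖μ a * x ^ a‖) := by
      have : (fun a => ‖μ a * x ^ a‖) = fun a => μ a * x ^ a :=
        funext fun a => Real.norm_of_nonneg (hμx_nn a)
      rw [this]; exact hμx
    have hg_nn : ∀ j, 0 ≤ sumLaw μ N j * x ^ j :=
      fun j => mul_nonneg (sumLaw_nonneg hnn N j) (pow_nonneg hx0 j)
    have hg : Summable (fun j => ‖sumLaw μ N j * x ^ j‖) := by
      have : (fun j => ‖sumLaw μ N j * x ^ j‖) = fun j => sumLaw μ N j * x ^ j :=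
        funext fun j => Real.norm_of_nonneg (hg_nn j)
      rw [this]; exact ih.1
    have key : ∀ j, sumLaw μ (N + 1) j * x ^ j =
        ∑ a ∈ Finset.range (j + 1), (μ a * x ^ a) * (sumLaw μ N (j - a) * x ^ (j - a)) := by
      intro j
      simp only [sumLaw]
      rw [Finset.sum_mul]
      refine Finset.sum_congr rfl fun a ha => ?_
      have haj : a ≤ j := Nat.lt_succ_iff.mp (Finset.mem_range.mp ha)
      have hxx : x ^ a * x ^ (j - a) = x ^ j := by
        rw [← pow_add, Nat.add_sub_cancel' haj]
      rw [← hxx]; ring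
    constructor
    · exact Summable.congr
        ((summable_norm_sum_mul_range_of_summable_norm hf hg).of_norm)
        (fun j => (key j).symm)
    · rw [tsum_congr key, ← tsum_mul_tsum_eq_tsum_sum_range_of_summable_norm hf hg, ih.2]
      ring

set_option maxHeartbeats 1000000 in
/-- With `c_1 = P(X_0^* ≥ 2) > 0`, for every `p ∈ [1 - c_1/4, 1]`,
every `k ≥ 1` and every `n ≥ ⌊(log k + log((4+c_1)/c_1))/log m⌋ + 1`,
`P(Σ_{i=1}^{m^n - k} X_{0,i} ≤ m^n) ≤ exp(-(c_1²/32)(m^n - k))`. -/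
theorem hoeffding_bound_for_X0_sums
    (m : ℕ) (hm : 2 ≤ m) (ν : ℕ → ℝ)
    (hν0 : ν 0 = 0) (hνnn : ∀ k, 0 ≤ ν k) (hνsum : ∑' k, ν k = 1)
    (c1 : ℝ) (hc1 : c1 = ∑' j : ℕ, ν (j + 2)) (hc1pos : 0 < c1)
    (p : ℝ) (hp : p ∈ Set.Icc (1 - c1 / 4) 1)
    (k : ℕ) (hk : 1 ≤ k)
    (n : ℕ)
    (hn : ⌊(Real.log k + Real.log ((4 + c1) / c1)) / Real.log m⌋ + 1 ≤ (n : ℤ)) :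
    ∑ j ∈ Finset.range (m ^ n + 1), sumLaw (mix ν p) (m ^ n - k) j ≤
      Real.exp (-(c1 ^ 2 / 32) * ((m ^ n - k : ℕ) : ℝ)) := by
  obtain ⟨hpl, hpu⟩ := hp
  -- summability of ν and basic identities
  have hνs : Summable ν := by
    by_contra h
    rw [tsum_eq_zero_of_not_summable h] at hνsum
    norm_num at hνsum
  have hν1s : Summable (fun j => ν (j + 1)) := (summable_nat_add_iff 1).2 hνs
  have hν2s : Summable (fun j => ν (j + 2)) := (summable_nat_add_iff 2).2 hνs
  have hν1 : ν 1 = 1 - c1 := by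
    have e1 : ∑' j, ν j = ν 0 + ∑' j, ν (j + 1) := Summable.tsum_eq_zero_add hνs
    have e2 : ∑' j, ν (j + 1) = ν 1 + ∑' j, ν (j + 1 + 1) := Summable.tsum_eq_zero_add hν1s
    have e3 : ∑' j, ν (j + 1 + 1) = ∑' j : ℕ, ν (j + 2) := by rfl
    rw [hν0] at e1
    rw [e3] at e2
    rw [hνsum] at e1
    rw [hc1]
    linarith [e1, e2]
  have hc1le : c1 ≤ 1 := by have := hνnn 1; linarith
  have hp0 : (0 : ℝ) ≤ p := by linarith
  -- the tilt parameter
  set lam : ℝ := c1 / 4 with hlam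
  have hlam0 : 0 ≤ lam := by rw [hlam]; linarith
  set x : ℝ := Real.exp (-lam) with hx
  have hx0 : 0 < x := Real.exp_pos _
  have hx1 : x ≤ 1 := by
    rw [hx, ← Real.exp_zero]
    exact Real.exp_le_exp.2 (by linarith)
  -- the mixed law
  have hμnn : ∀ a, 0 ≤ mix ν p a := by
    intro a
    apply add_nonneg
    · apply mul_nonneg (by linarith)
      split <;> norm_num
    · exact mul_nonneg hp0 (hνnn a)
  have hμs : Summable (mix ν p) := by
    apply Summable.add
    · apply Summable.mul_left
      apply summable_of_ne_finset_zero (s := ({0} : Finset ℕ))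
      intro j hj
      rw [if_neg (by simpa using hj)]
    · exact hνs.mul_left p
  -- the mgf bound
  have hνx_nn : ∀ a, 0 ≤ ν a * x ^ a := fun a => mul_nonneg (hνnn a) (pow_nonneg hx0.le a)
  have hνx : Summable (fun a => ν a * x ^ a) := by
    apply Summable.of_nonneg_of_le hνx_nn (fun a => ?_) hνs
    calc ν a * x ^ a ≤ ν a * 1 := mul_le_mul_of_nonneg_left (pow_le_one₀ hx0.le hx1) (hνnn a)
      _ = ν a := mul_one _
  have hνx1 : Summable (fun a => ν (a + 1) * x ^ (a + 1)) :=
    (summable_nat_add_iff 1).2 hνx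
  have hνx2 : Summable (fun a => ν (a + 1 + 1) * x ^ (a + 1 + 1)) :=
    (summable_nat_add_iff 2).2 hνx
  have hT : ∑' a, ν a * x ^ a ≤ (1 - c1) * x + c1 * x ^ 2 := by
    rw [Summable.tsum_eq_zero_add hνx, Summable.tsum_eq_zero_add hνx1]
    have htail : ∑' a, ν (a + 1 + 1) * x ^ (a + 1 + 1) ≤ c1 * x ^ 2 := by
      have hb : ∀ a : ℕ, ν (a + 1 + 1) * x ^ (a + 1 + 1) ≤ ν (a + 2) * x ^ 2 := by
        intro a
        have : x ^ (a + 1 + 1) ≤ x ^ 2 :=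
          pow_le_pow_of_le_one hx0.le hx1 (by omega)
        exact mul_le_mul_of_nonneg_left this (hνnn _)
      calc ∑' a, ν (a + 1 + 1) * x ^ (a + 1 + 1)
          ≤ ∑' a, ν (a + 2) * x ^ 2 :=
            Summable.tsum_le_tsum hb hνx2 (by exact hν2s.mul_right (x ^ 2))
        _ = (∑' a : ℕ, ν (a + 2)) * x ^ 2 := tsum_mul_right
        _ = c1 * x ^ 2 := by rw [← hc1]
    rw [hν0, hν1]
    simp only [pow_zero, zero_add, pow_one, zero_mul, mul_one]
    linarith [htail]
  have hMsplit : ∑' a, mix ν p a * x ^ a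
      = (1 - p) + p * ∑' a, ν a * x ^ a := by
    have hsplit : ∀ a : ℕ, mix ν p a * x ^ a
        = (if a = 0 then (1 - p) else 0) + p * (ν a * x ^ a) := by
      intro a
      simp only [mix]
      by_cases ha : a = 0
      · simp [ha]
      · simp [ha]; ring
    rw [tsum_congr hsplit, Summable.tsum_add (summable_of_ne_finset_zero (s := ({0} : Finset ℕ))
      (fun j hj => if_neg (by simpa using hj))) (hνx.mul_left p), tsum_ite_eq, tsum_mul_left]
  set M : ℝ := ∑' a, mix ν p a * x ^ a with hM
  have hM0 : 0 ≤ M :=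
    tsum_nonneg fun a => mul_nonneg (hμnn a) (pow_nonneg hx0.le a)
  set M' : ℝ := 1 - p + p * (1 - c1) * x + p * c1 * x ^ 2 with hM'
  have hMle : M ≤ M' := by
    rw [hMsplit, hM']
    nlinarith [mul_le_mul_of_nonneg_left hT hp0]
  -- arithmetic consequences of hn
  have hm2 : (2 : ℝ) ≤ (m : ℝ) := by exact_mod_cast hm
  have hlogm : 0 < Real.log m := Real.log_pos (by linarith)
  have hk0 : (0 : ℝ) < (k : ℝ) := by exact_mod_cast hk
  have hratio : (0 : ℝ) < (4 + c1) / c1 := by positivity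
  have hyn : (Real.log k + Real.log ((4 + c1) / c1)) / Real.log m < (n : ℝ) := by
    have h1 := Int.lt_floor_add_one ((Real.log k + Real.log ((4 + c1) / c1)) / Real.log m)
    have h2 : ((⌊(Real.log k + Real.log ((4 + c1) / c1)) / Real.log m⌋ : ℤ) : ℝ) + 1 ≤ (n : ℝ) := by
      exact_mod_cast hn
    linarith
  have hkey : (k : ℝ) * ((4 + c1) / c1) < (m : ℝ) ^ n := by
    have hlt : Real.log ((k : ℝ) * ((4 + c1) / c1)) < Real.log ((m : ℝ) ^ n) := by
      rw [Real.log_mul (ne_of_gt hk0) (ne_of_gt hratio), Real.log_pow]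
      calc Real.log k + Real.log ((4 + c1) / c1) < n * Real.log m := by
            exact (div_lt_iff₀ hlogm).1 hyn
        _ = (n : ℕ) * Real.log m := by norm_num
    have hpos : (0 : ℝ) < (k : ℝ) * ((4 + c1) / c1) := by positivity
    exact (Real.log_lt_log_iff hpos (by positivity)).1 hlt
  have hkey' : (k : ℝ) * (4 + c1) < c1 * (m : ℝ) ^ n := by
    calc (k : ℝ) * (4 + c1) = (k : ℝ) * ((4 + c1) / c1) * c1 := by field_simp
      _ < (m : ℝ) ^ n * c1 := mul_lt_mul_of_pos_right hkey hc1pos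
      _ = c1 * (m : ℝ) ^ n := mul_comm _ _
  have hkm : (k : ℝ) < (m : ℝ) ^ n := by nlinarith
  have hkmn : k ≤ m ^ n := by
    have : (k : ℝ) < ((m ^ n : ℕ) : ℝ) := by push_cast; exact hkm
    exact_mod_cast this.le
  have hNr : ((m ^ n - k : ℕ) : ℝ) = (m : ℝ) ^ n - (k : ℝ) := by
    rw [Nat.cast_sub hkmn]; push_cast; ring
  have ht_le : ((m ^ n : ℕ) : ℝ) ≤ (1 + c1 / 4) * ((m ^ n - k : ℕ) : ℝ) := by
    rw [hNr]; push_cast; nlinarith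
  -- Chernoff assembly
  obtain ⟨hsum, htsum⟩ := sumLaw_tsum hμnn hμs hx0.le hx1 (m ^ n - k)
  have markov : (∑ j ∈ Finset.range (m ^ n + 1), sumLaw (mix ν p) (m ^ n - k) j) * x ^ (m ^ n)
      ≤ M ^ (m ^ n - k) := by
    rw [Finset.sum_mul]
    calc ∑ j ∈ Finset.range (m ^ n + 1), sumLaw (mix ν p) (m ^ n - k) j * x ^ (m ^ n)
        ≤ ∑ j ∈ Finset.range (m ^ n + 1), sumLaw (mix ν p) (m ^ n - k) j * x ^ j := by
          apply Finset.sum_le_sum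
          intro j hj
          exact mul_le_mul_of_nonneg_left
            (pow_le_pow_of_le_one hx0.le hx1 (Nat.lt_succ_iff.mp (Finset.mem_range.mp hj)))
            (sumLaw_nonneg hμnn _ j)
      _ ≤ ∑' j, sumLaw (mix ν p) (m ^ n - k) j * x ^ j :=
          Summable.sum_le_tsum _ (fun j _ => mul_nonneg (sumLaw_nonneg hμnn _ j) (pow_nonneg hx0.le j)) hsum
      _ = M ^ (m ^ n - k) := htsum
  have hxt : x ^ (m ^ n) = Real.exp (-(lam * (m ^ n : ℕ))) := by
    rw [hx, ← Real.exp_nat_mul]; congr 1; ring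
  have hP : ∑ j ∈ Finset.range (m ^ n + 1), sumLaw (mix ν p) (m ^ n - k) j
      ≤ M ^ (m ^ n - k) * Real.exp (lam * (m ^ n : ℕ)) := by
    have h1 : (∑ j ∈ Finset.range (m ^ n + 1), sumLaw (mix ν p) (m ^ n - k) j)
        = ((∑ j ∈ Finset.range (m ^ n + 1), sumLaw (mix ν p) (m ^ n - k) j) * x ^ (m ^ n))
          * Real.exp (lam * (m ^ n : ℕ)) := by
      rw [hxt, mul_assoc, ← Real.exp_add]
      simp
    rw [h1]
    exact mul_le_mul_of_nonneg_right markov (Real.exp_nonneg _)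
  have hM'0 : 0 ≤ M' := le_trans hM0 hMle
  have core := core_exp hc1pos hc1le hpl hpu
  have hcore' : M' * Real.exp (lam * (1 + c1 / 4)) ≤ Real.exp (-(c1 ^ 2 / 32)) := by
    rw [hlam, hM']
    calc (1 - p + p * (1 - c1) * x + p * c1 * x ^ 2) * Real.exp (c1 / 4 * (1 + c1 / 4))
        = Real.exp (c1 / 4 * (1 + c1 / 4)) *
            (1 - p + p * (1 - c1) * Real.exp (-(c1 / 4)) + p * c1 * Real.exp (-(c1 / 2))) := by
          rw [hx, hlam]
          have hxx : Real.exp (-(c1 / 4)) ^ 2 = Real.exp (-(c1 / 2)) := by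
            rw [sq, ← Real.exp_add]; congr 1; ring
          rw [← hxx]; ring
      _ ≤ Real.exp (-(c1 ^ 2 / 32)) := core
  calc ∑ j ∈ Finset.range (m ^ n + 1), sumLaw (mix ν p) (m ^ n - k) j
      ≤ M ^ (m ^ n - k) * Real.exp (lam * (m ^ n : ℕ)) := hP
    _ ≤ M' ^ (m ^ n - k) * Real.exp (lam * ((1 + c1 / 4) * ((m ^ n - k : ℕ) : ℝ))) := by
        apply mul_le_mul (pow_le_pow_left₀ hM0 hMle _)
          (Real.exp_le_exp.2 (by nlinarith [ht_le, hlam0])) (Real.exp_nonneg _)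
          (pow_nonneg hM'0 _)
    _ = (M' * Real.exp (lam * (1 + c1 / 4))) ^ (m ^ n - k) := by
        rw [mul_pow, ← Real.exp_nat_mul]
        congr 2
        ring
    _ ≤ Real.exp (-(c1 ^ 2 / 32)) ^ (m ^ n - k) := by
        apply pow_le_pow_left₀ (mul_nonneg hM'0 (Real.exp_nonneg _)) hcore'
    _ = Real.exp (-(c1 ^ 2 / 32) * ((m ^ n - k : ℕ) : ℝ)) := by
        rw [← Real.exp_nat_mul]
        congr 1
        ring
end
end

section
/- Fix δ ∈ (0, 1/2) and assume c_2 := E(m^{(1−δ)X_0^*}) < ∞. Then for every p ∈ (0,1), every integer k ≥ 1 and every integer n ≥ 1, |d^k/dp^k P(X_n = 0)| ≤ 2^k · k! · m^{kn} · P(X_n = 0)/(1−p)^k. -/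
noncomputable section

/-- One step of the Derrida–Retaux recursion on probability mass functions on ℕ. -/
def drStep (m : ℕ) (μ : ℕ → ℝ) : ℕ → ℝ :=
  fun j => ∑' x : Fin m → ℕ, if (∑ i, x i) - 1 = j then ∏ i, μ (x i) else 0

/-- The mass function of `X_n`. -/
def drLaw (m : ℕ) (ν : ℕ → ℝ) (p : ℝ) (n : ℕ) : ℕ → ℝ :=
  (drStep m)^[n] (mix ν p)

open Finset MvPolynomial

abbrev P2 : Type := MvPolynomial (Fin 2) ℝ

/-- Polynomial model of the law of `X_n`, in variables `X 0 = p`, `X 1 = 1 - p`. -/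
def DR (m : ℕ) (ν : ℕ → ℝ) : ℕ → ℕ → P2
  | 0, j => MvPolynomial.C (ν j) * X 0 + if j = 0 then X 1 else 0
  | n+1, j => ∑ x ∈ Fintype.piFinset (fun _ : Fin m => Finset.range (j+2)),
      if (∑ i, x i) - 1 = j then ∏ i, DR m ν n (x i) else 0

lemma drStep_eq_sum (m : ℕ) (μ : ℕ → ℝ) (j : ℕ) :
    drStep m μ j = ∑ x ∈ Fintype.piFinset (fun _ : Fin m => Finset.range (j+2)),
      if (∑ i, x i) - 1 = j then ∏ i, μ (x i) else 0 := by
  refine tsum_eq_sum ?_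
  intro x hx
  rw [if_neg]
  simp only [Fintype.mem_piFinset, Finset.mem_range, not_forall, not_lt] at hx
  obtain ⟨i, hi⟩ := hx
  have h2 : j + 2 ≤ ∑ i, x i :=
    le_trans hi (Finset.single_le_sum (fun i _ => Nat.zero_le _) (Finset.mem_univ i))
  omega

lemma eval_DR (m : ℕ) (ν : ℕ → ℝ) (q : ℝ) : ∀ (n : ℕ) (j : ℕ),
    drLaw m ν q n j = MvPolynomial.eval (fun i : Fin 2 => if i = 0 then q else 1 - q)
      (DR m ν n j) := by
  intro n
  induction n with
  | zero =>
    intro j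
    simp only [drLaw, Function.iterate_zero, id_eq, DR, mix]
    rcases eq_or_ne j 0 with h | h <;>
      simp [h, eval_X, eval_C] <;> ring
  | succ n ih =>
    intro j
    have hit : drLaw m ν q (n+1) j = drStep m (drLaw m ν q n) j := by
      simp only [drLaw, Function.iterate_succ_apply']
    rw [hit, drStep_eq_sum, DR, map_sum]
    refine Finset.sum_congr rfl fun x _ => ?_
    split
    · rw [map_prod]
      exact Finset.prod_congr rfl fun i _ => ih (x i)
    · simp

def NN (Q : P2) : Prop := ∀ d, 0 ≤ Q.coeff d

lemma nn_add {f g : P2} (hf : NN f) (hg : NN g) : NN (f + g) := fun d => by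
  rw [coeff_add]; exact add_nonneg (hf d) (hg d)

lemma nn_zero : NN (0 : P2) := fun d => by simp

lemma nn_one : NN (1 : P2) := fun d => by
  rw [← C_1, coeff_C]; positivity

lemma nn_sum {α : Type*} {s : Finset α} {f : α → P2} (h : ∀ a ∈ s, NN (f a)) :
    NN (∑ a ∈ s, f a) := fun d => by
  rw [coeff_sum]; exact Finset.sum_nonneg fun a ha => h a ha d

lemma nn_mul {f g : P2} (hf : NN f) (hg : NN g) : NN (f * g) := fun d => by
  classical
  rw [coeff_mul]
  exact Finset.sum_nonneg fun x _ => mul_nonneg (hf _) (hg _)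

lemma nn_prod {α : Type*} {s : Finset α} {f : α → P2} (h : ∀ a ∈ s, NN (f a)) :
    NN (∏ a ∈ s, f a) := by
  classical
  induction s using Finset.induction_on with
  | empty => simpa using nn_one
  | insert _ _ hx ih =>
    rw [Finset.prod_insert hx]
    exact nn_mul (h _ (Finset.mem_insert_self _ _))
      (ih fun a ha => h a (Finset.mem_insert_of_mem ha))

lemma nn_monomial {d : Fin 2 →₀ ℕ} {r : ℝ} (hr : 0 ≤ r) : NN (monomial d r) := fun e => by
  rw [coeff_monomial]; positivity

lemma nn_C {r : ℝ} (hr : 0 ≤ r) : NN (MvPolynomial.C r : P2) := fun e => by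
  rw [coeff_C]; positivity

lemma nn_X (i : Fin 2) : NN (X i : P2) := by
  rw [X]; exact nn_monomial zero_le_one

lemma nn_pderiv (i : Fin 2) {f : P2} (hf : NN f) : NN (pderiv i f) := by
  have : f = ∑ d ∈ f.support, monomial d (f.coeff d) := (support_sum_monomial_coeff f).symm
  rw [this, map_sum]
  refine nn_sum fun d _ => ?_
  rw [pderiv_monomial]
  exact nn_monomial (mul_nonneg (hf d) (Nat.cast_nonneg _))

lemma nn_eval {σ : Fin 2 → ℝ} (hσ : ∀ i, 0 ≤ σ i) {f : P2} (hf : NN f) :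
    0 ≤ eval σ f := by
  rw [eval_eq]
  refine Finset.sum_nonneg fun d _ => mul_nonneg (hf d) (Finset.prod_nonneg fun i _ => ?_)
  exact pow_nonneg (hσ i) _

lemma pderiv_comm01 (f : P2) :
    pderiv (0 : Fin 2) (pderiv 1 f) = pderiv 1 (pderiv 0 f) := by
  induction f using MvPolynomial.induction_on' with
  | monomial u a =>
    simp only [pderiv_monomial]
    rw [tsub_right_comm]
    congr 1
    have h0 : ((u - Finsupp.single (1 : Fin 2) 1 : Fin 2 →₀ ℕ)) 0 = u 0 := by
      rw [Finsupp.tsub_apply, Finsupp.single_apply]; simp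
    have h1 : ((u - Finsupp.single (0 : Fin 2) 1 : Fin 2 →₀ ℕ)) 1 = u 1 := by
      rw [Finsupp.tsub_apply, Finsupp.single_apply]; simp
    rw [h0, h1]; ring
  | add p q hp hq => simp [map_add, hp, hq]

lemma pdIter_mul (i : Fin 2) : ∀ (l : ℕ) (f g : P2),
    (⇑(pderiv i))^[l] (f * g) =
      ∑ u ∈ range (l + 1), l.choose u • ((⇑(pderiv i))^[l - u] f * (⇑(pderiv i))^[u] g) := by
  intro l
  induction l with
  | zero => intro f g; simp [Finset.range]
  | succ n IH =>
    intro p q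
    calc
      (⇑(pderiv i))^[n + 1] (p * q) =
          pderiv i (∑ k ∈ range (n + 1),
              n.choose k • ((⇑(pderiv i))^[n - k] p * (⇑(pderiv i))^[k] q)) := by
        rw [Function.iterate_succ_apply', IH]
      _ = (∑ k ∈ range (n + 1),
            n.choose k • ((⇑(pderiv i))^[n - k + 1] p * (⇑(pderiv i))^[k] q)) +
          ∑ k ∈ range (n + 1),
            n.choose k • ((⇑(pderiv i))^[n - k] p * (⇑(pderiv i))^[k + 1] q) := by
        rw [map_sum]
        simp_rw [map_nsmul, pderiv_mul, Function.iterate_succ_apply',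
          smul_add, sum_add_distrib]
      _ = (∑ k ∈ range (n + 1),
                n.choose (k + 1) • ((⇑(pderiv i))^[n - k] p * (⇑(pderiv i))^[k + 1] q)) +
              1 • ((⇑(pderiv i))^[n + 1] p * (⇑(pderiv i))^[0] q) +
            ∑ k ∈ range (n + 1), n.choose k • ((⇑(pderiv i))^[n - k] p * (⇑(pderiv i))^[k + 1] q) :=
        ?_
      _ = ((∑ k ∈ range (n + 1), n.choose k • ((⇑(pderiv i))^[n - k] p * (⇑(pderiv i))^[k + 1] q)) +
              ∑ k ∈ range (n + 1),
                n.choose (k + 1) • ((⇑(pderiv i))^[n - k] p * (⇑(pderiv i))^[k + 1] q)) +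
            1 • ((⇑(pderiv i))^[n + 1] p * (⇑(pderiv i))^[0] q) := by
        rw [add_comm, add_assoc]
      _ = (∑ k ∈ range (n + 1),
              (n + 1).choose (k + 1) • ((⇑(pderiv i))^[n + 1 - (k + 1)] p * (⇑(pderiv i))^[k + 1] q)) +
            1 • ((⇑(pderiv i))^[n + 1] p * (⇑(pderiv i))^[0] q) := by
        simp_rw [Nat.choose_succ_succ, Nat.succ_sub_succ, add_smul, sum_add_distrib]
      _ = ∑ k ∈ range (n + 2),
            (n + 1).choose k • ((⇑(pderiv i))^[n + 1 - k] p * (⇑(pderiv i))^[k] q) := by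
        rw [sum_range_succ' _ (n + 1), Nat.choose_zero_right, tsub_zero]
    congr
    refine (sum_range_succ' _ _).trans (congr_arg₂ (· + ·) ?_ ?_)
    · rw [sum_range_succ, Nat.choose_succ_self, zero_smul, add_zero]
      refine sum_congr rfl fun k hk => ?_
      rw [mem_range] at hk
      congr
      omega
    · rw [Nat.choose_zero_right, tsub_zero]

def Wc (m : ℕ) (ν : ℕ → ℝ) (n : ℕ) : ℕ → ℕ → P2
  | 0, _ => 1
  | t+1, s => ∑ v ∈ Finset.range (s+1), DR m ν n v * Wc m ν n t (s - v)

def cdfDR (m : ℕ) (ν : ℕ → ℝ) (n j : ℕ) : P2 := ∑ j' ∈ Finset.range (j+1), DR m ν n j'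

lemma sum_piFinset_cons {M : Type*} [AddCommMonoid M] (t B : ℕ) (F : (Fin (t+1) → ℕ) → M) :
    ∑ x ∈ Fintype.piFinset (fun _ : Fin (t+1) => Finset.range B), F x
      = ∑ v ∈ Finset.range B, ∑ y ∈ Fintype.piFinset (fun _ : Fin t => Finset.range B),
          F (Fin.cons v y) := by
  rw [← Finset.sum_product']
  refine Finset.sum_nbij' (i := fun (x : Fin (t+1) → ℕ) => ((x 0, Fin.tail x) : ℕ × (Fin t → ℕ)))
    (j := fun (p : ℕ × (Fin t → ℕ)) => Fin.cons p.1 p.2) ?_ ?_ ?_ ?_ ?_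
  · intro x hx
    simp only [Fintype.mem_piFinset] at hx
    simp only [Finset.mem_product, Fintype.mem_piFinset]
    exact ⟨hx 0, fun i => hx i.succ⟩
  · intro p hp
    simp only [Finset.mem_product, Fintype.mem_piFinset] at hp
    simp only [Fintype.mem_piFinset]
    intro i
    refine Fin.cases ?_ ?_ i
    · simpa using hp.1
    · intro i'; simpa [Fin.tail] using hp.2 i'
  · intro x _; exact Fin.cons_self_tail x
  · intro p _; simp
  · intro x _
    congr 1
    exact (Fin.cons_self_tail x).symm

lemma W_eq (m : ℕ) (ν : ℕ → ℝ) (n : ℕ) : ∀ (t s : ℕ),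
    Wc m ν n t s = ∑ x ∈ Fintype.piFinset (fun _ : Fin t => Finset.range (s+1)),
      if (∑ i, x i) ≤ s then ∏ i, DR m ν n (x i) else 0 := by
  intro t
  induction t with
  | zero =>
    intro s
    simp [Wc]
  | succ t ih =>
    intro s
    rw [Wc, sum_piFinset_cons]
    refine Finset.sum_congr rfl fun v hv => ?_
    rw [Finset.mem_range] at hv
    have hsub : Fintype.piFinset (fun _ : Fin t => Finset.range (s - v + 1)) ⊆
        Fintype.piFinset (fun _ : Fin t => Finset.range (s + 1)) :=
      Fintype.piFinset_subset _ _ (fun _ => by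
        intro z hz; rw [Finset.mem_range] at hz ⊢; omega)
    have h1 : Wc m ν n t (s - v) =
        ∑ y ∈ Fintype.piFinset (fun _ : Fin t => Finset.range (s + 1)),
          if (∑ i, y i) ≤ s - v then ∏ i, DR m ν n (y i) else 0 := by
      rw [ih (s - v)]
      refine Finset.sum_subset hsub ?_
      intro y _ hyn
      rw [if_neg]
      simp only [Fintype.mem_piFinset, Finset.mem_range, not_forall, not_lt] at hyn
      obtain ⟨i, hi⟩ := hyn
      have : s - v + 1 ≤ ∑ i, y i :=
        le_trans hi (Finset.single_le_sum (fun i _ => Nat.zero_le _) (Finset.mem_univ i))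
      omega
    rw [h1, Finset.mul_sum]
    refine Finset.sum_congr rfl fun y hy => ?_
    have hsum : (∑ i, (Fin.cons v y : Fin (t+1) → ℕ) i) = v + ∑ i, y i := by
      simp [Fin.sum_univ_succ]
    rw [mul_ite, mul_zero]
    refine (if_congr ?_ ?_ rfl).symm
    · omega
    · rw [Fin.prod_univ_succ]
      simp

lemma cdfDR_succ_eq_W (m : ℕ) (ν : ℕ → ℝ) (n j : ℕ) :
    cdfDR m ν (n+1) j = Wc m ν n m (j+1) := by
  rw [cdfDR, W_eq]
  have step : ∀ j' ∈ Finset.range (j+1), DR m ν (n+1) j' =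
      ∑ x ∈ Fintype.piFinset (fun _ : Fin m => Finset.range (j+2)),
        if (∑ i, x i) - 1 = j' then ∏ i, DR m ν n (x i) else 0 := by
    intro j' hj'
    rw [Finset.mem_range] at hj'
    rw [DR]
    refine Finset.sum_subset (Fintype.piFinset_subset _ _ (fun _ => by
      intro z hz; rw [Finset.mem_range] at hz ⊢; omega)) ?_
    intro x _ hxn
    rw [if_neg]
    simp only [Fintype.mem_piFinset, Finset.mem_range, not_forall, not_lt] at hxn
    obtain ⟨i, hi⟩ := hxn
    have : j' + 2 ≤ ∑ i, x i :=
      le_trans hi (Finset.single_le_sum (fun i _ => Nat.zero_le _) (Finset.mem_univ i))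
    omega
  rw [Finset.sum_congr rfl step, Finset.sum_comm]
  refine Finset.sum_congr rfl fun x _ => ?_
  rw [Finset.sum_ite_eq (Finset.range (j+1)) ((∑ i, x i) - 1)
    (fun _ => ∏ i, DR m ν n (x i))]
  refine if_congr ?_ rfl rfl
  rw [Finset.mem_range]
  omega

lemma abel_replace (c : ℝ) (A g : ℕ → ℝ)
    (hc : ∀ V : ℕ, ∑ v ∈ range (V+1), A v ≤ c * ∑ v ∈ range (V+1), g v) :
    ∀ (s : ℕ) (B : ℕ → ℝ), 0 ≤ B 0 → (∀ u, B u ≤ B (u+1)) →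
    ∑ v ∈ range (s+1), A v * B (s - v) ≤ c * ∑ v ∈ range (s+1), g v * B (s - v) := by
  intro s
  induction s with
  | zero =>
    intro B hB0 hBm
    have h := hc 0
    simp only [Finset.sum_range_one, Nat.zero_add, Nat.sub_self] at h ⊢
    nlinarith [mul_le_mul_of_nonneg_right h hB0]
  | succ s ih =>
    intro B hB0 hBm
    have e1 : ∀ (D : ℕ → ℝ), ∑ v ∈ range (s+2), D v * B (s+1-v)
        = (∑ v ∈ range (s+1), D v * (B (s-v+1) - B 0)) + B 0 * ∑ v ∈ range (s+2), D v := by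
      intro D
      rw [Finset.sum_range_succ (f := fun v => D v * B (s+1-v)),
        Finset.sum_range_succ (f := fun v => D v)]
      have h2 : ∀ v ∈ range (s+1), D v * B (s+1-v) = D v * (B (s-v+1) - B 0) + B 0 * D v := by
        intro v hv
        rw [Finset.mem_range] at hv
        have h3 : s + 1 - v = s - v + 1 := by omega
        rw [h3]; ring
      rw [Finset.sum_congr rfl h2, Finset.sum_add_distrib, ← Finset.mul_sum]
      have h4 : s + 1 - (s+1) = 0 := by omega
      rw [h4]; ring
    rw [e1 A, e1 g, mul_add]
    have hmono : ∀ u : ℕ, B (u+1) - B 0 ≤ B (u+1+1) - B 0 := by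
      intro u
      have := hBm (u+1)
      linarith
    have hb1 : (0:ℝ) ≤ B 1 - B 0 := by have := hBm 0; linarith
    have step1 := ih (fun u => B (u+1) - B 0) hb1 hmono
    have step2 : B 0 * ∑ v ∈ range (s+2), A v ≤ c * (B 0 * ∑ v ∈ range (s+2), g v) := by
      have := mul_le_mul_of_nonneg_left (hc (s+1)) hB0
      nlinarith []
    exact add_le_add step1 step2

lemma coeff_bound (l r t : ℕ) :
    ∑ i ∈ range (l+1), ∑ q ∈ range (r+1),
      ((l.choose i : ℝ) * (r.choose q) * ((i+q).factorial) * ((l+r-(i+q)).factorial)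
        * (t:ℝ)^(i+q))
      ≤ ((l+r).factorial : ℝ) * ((t:ℝ)+1)^(l+r) := by
  rw [← Finset.sum_product']
  have hmaps : ∀ p ∈ range (l+1) ×ˢ range (r+1), p.1 + p.2 ∈ range (l+r+1) := by
    intro p hp
    rw [Finset.mem_product, Finset.mem_range, Finset.mem_range] at hp
    rw [Finset.mem_range]; omega
  rw [← Finset.sum_fiberwise_of_maps_to hmaps]
  have hinner : ∀ w ∈ range (l+r+1),
      ∑ p ∈ (range (l+1) ×ˢ range (r+1)).filter (fun p => p.1 + p.2 = w),
        ((l.choose p.1 : ℝ) * (r.choose p.2) * ((p.1+p.2).factorial) * ((l+r-(p.1+p.2)).factorial)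
          * (t:ℝ)^(p.1+p.2))
      = ((l+r).factorial : ℝ) * (t:ℝ)^w := by
    intro w hw
    rw [Finset.mem_range] at hw
    have hstep : ∀ p ∈ (range (l+1) ×ˢ range (r+1)).filter (fun p => p.1 + p.2 = w),
        ((l.choose p.1 : ℝ) * (r.choose p.2) * ((p.1+p.2).factorial) * ((l+r-(p.1+p.2)).factorial)
          * (t:ℝ)^(p.1+p.2))
        = ((l.choose p.1 : ℝ) * (r.choose p.2)) * ((w.factorial) * ((l+r-w).factorial)
          * (t:ℝ)^w) := by
      intro p hp
      rw [Finset.mem_filter] at hp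
      rw [hp.2]; ring
    rw [Finset.sum_congr rfl hstep, ← Finset.sum_mul]
    have hch : ∑ p ∈ (range (l+1) ×ˢ range (r+1)).filter (fun p => p.1 + p.2 = w),
        ((l.choose p.1 : ℝ) * (r.choose p.2)) = ((l+r).choose w : ℝ) := by
      have hnat : ∑ p ∈ (range (l+1) ×ˢ range (r+1)).filter (fun p => p.1 + p.2 = w),
          (l.choose p.1 * r.choose p.2) = (l+r).choose w := by
        rw [Nat.add_choose_eq]
        refine Finset.sum_subset ?_ ?_
        · intro p hp
          rw [Finset.mem_filter] at hp
          rw [Finset.HasAntidiagonal.mem_antidiagonal]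
          exact hp.2
        · intro p hp hpn
          rw [Finset.HasAntidiagonal.mem_antidiagonal] at hp
          rw [Finset.mem_filter, Finset.mem_product, Finset.mem_range, Finset.mem_range] at hpn
          have : l < p.1 ∨ r < p.2 := by omega
          rcases this with h | h
          · rw [Nat.choose_eq_zero_of_lt h, Nat.zero_mul]
          · rw [Nat.choose_eq_zero_of_lt h, Nat.mul_zero]
      calc ∑ p ∈ (range (l+1) ×ˢ range (r+1)).filter (fun p => p.1 + p.2 = w),
          ((l.choose p.1 : ℝ) * (r.choose p.2))
          = ((∑ p ∈ (range (l+1) ×ˢ range (r+1)).filter (fun p => p.1 + p.2 = w),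
              (l.choose p.1 * r.choose p.2) : ℕ) : ℝ) := by
            push_cast; rfl
        _ = ((l+r).choose w : ℝ) := by rw [hnat]
    rw [hch]
    have hfac : ((l+r).choose w : ℝ) * (w.factorial : ℝ) * ((l+r-w).factorial : ℝ)
        = ((l+r).factorial : ℝ) := by
      have := Nat.choose_mul_factorial_mul_factorial (Nat.lt_succ_iff.mp hw)
      calc ((l+r).choose w : ℝ) * (w.factorial : ℝ) * ((l+r-w).factorial : ℝ)
          = (((l+r).choose w * w.factorial * (l+r-w).factorial : ℕ) : ℝ) := by push_cast; ring
        _ = ((l+r).factorial : ℝ) := by rw [this]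
    calc ((l+r).choose w : ℝ) * ((w.factorial) * ((l+r-w).factorial) * (t:ℝ)^w)
        = (((l+r).choose w : ℝ) * (w.factorial : ℝ) * ((l+r-w).factorial : ℝ)) * (t:ℝ)^w := by
          ring
      _ = ((l+r).factorial : ℝ) * (t:ℝ)^w := by rw [hfac]
  rw [Finset.sum_congr rfl hinner, ← Finset.mul_sum]
  refine mul_le_mul_of_nonneg_left ?_ (by positivity)
  have hbin : ((t:ℝ)+1)^(l+r) = ∑ w ∈ range (l+r+1), (t:ℝ)^w * 1^(l+r-w) * ((l+r).choose w) :=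
    add_pow (t:ℝ) 1 (l+r)
  rw [hbin]
  refine Finset.sum_le_sum fun w hw => ?_
  rw [Finset.mem_range] at hw
  have h1 : (1:ℝ) ≤ ((l+r).choose w : ℝ) := by
    exact_mod_cast Nat.one_le_iff_ne_zero.mpr (Nat.pos_iff_ne_zero.mp
      (Nat.choose_pos (Nat.lt_succ_iff.mp hw)))
  calc (t:ℝ)^w = (t:ℝ)^w * 1 := by ring
    _ ≤ (t:ℝ)^w * 1^(l+r-w) * ((l+r).choose w) := by
        rw [one_pow]
        nlinarith [pow_nonneg (Nat.cast_nonneg (α := ℝ) t) w]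
-- ===== iterated derivative helpers =====

lemma pditer_zero (i : Fin 2) (k : ℕ) : (⇑(pderiv i))^[k] (0 : P2) = 0 := by
  induction k with
  | zero => rfl
  | succ k ih => rw [Function.iterate_succ_apply, map_zero, ih]

lemma pditer_one (i : Fin 2) (k : ℕ) (hk : 1 ≤ k) : (⇑(pderiv i))^[k] (1 : P2) = 0 := by
  obtain ⟨k', rfl⟩ : ∃ k', k = k' + 1 := ⟨k - 1, by omega⟩
  rw [Function.iterate_succ_apply, pderiv_one, pditer_zero]

lemma pditer_sum (i : Fin 2) (k : ℕ) {α : Type*} (s : Finset α) (f : α → P2) :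
    (⇑(pderiv i))^[k] (∑ a ∈ s, f a) = ∑ a ∈ s, (⇑(pderiv i))^[k] (f a) := by
  induction k generalizing f with
  | zero => rfl
  | succ k ih =>
    rw [Function.iterate_succ_apply, map_sum]
    exact ih _

lemma pditer_nsmul (i : Fin 2) (k : ℕ) (c : ℕ) (f : P2) :
    (⇑(pderiv i))^[k] (c • f) = c • (⇑(pderiv i))^[k] f := by
  induction k generalizing f with
  | zero => rfl
  | succ k ih =>
    rw [Function.iterate_succ_apply, map_nsmul]
    exact ih _

lemma pditer_sub (i : Fin 2) (k : ℕ) (f g : P2) :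
    (⇑(pderiv i))^[k] (f - g) = (⇑(pderiv i))^[k] f - (⇑(pderiv i))^[k] g := by
  induction k generalizing f g with
  | zero => rfl
  | succ k ih =>
    rw [Function.iterate_succ_apply, map_sub]
    exact ih _ _

/-- Mixed iterated partial derivative. -/
def Dlr (l r : ℕ) (Q : P2) : P2 := (⇑(pderiv (0 : Fin 2)))^[l] ((⇑(pderiv (1 : Fin 2)))^[r] Q)

lemma Dlr_sum (l r : ℕ) {α : Type*} (s : Finset α) (f : α → P2) :
    Dlr l r (∑ a ∈ s, f a) = ∑ a ∈ s, Dlr l r (f a) := by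
  simp only [Dlr, pditer_sum]

lemma Dlr_sub (l r : ℕ) (f g : P2) : Dlr l r (f - g) = Dlr l r f - Dlr l r g := by
  simp only [Dlr, pditer_sub]

lemma nn_pditer (i : Fin 2) (k : ℕ) {f : P2} (hf : NN f) : NN ((⇑(pderiv i))^[k] f) := by
  induction k generalizing f with
  | zero => exact hf
  | succ k ih =>
    rw [Function.iterate_succ_apply]
    exact ih (nn_pderiv i hf)

lemma nn_Dlr (l r : ℕ) {f : P2} (hf : NN f) : NN (Dlr l r f) :=
  nn_pditer _ _ (nn_pditer _ _ hf)

lemma Dlr_mul (l r : ℕ) (f g : P2) :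
    Dlr l r (f * g) = ∑ q ∈ range (r+1), ∑ i ∈ range (l+1),
      (r.choose q * l.choose i) • (Dlr (l-i) (r-q) f * Dlr i q g) := by
  simp only [Dlr]
  rw [pdIter_mul 1 r f g, pditer_sum]
  refine Finset.sum_congr rfl fun q hq => ?_
  rw [pditer_nsmul, pdIter_mul 0 l _ _, Finset.smul_sum]
  refine Finset.sum_congr rfl fun i hi => ?_
  rw [smul_smul]

-- ===== nonnegativity of the polynomial families =====

lemma nn_DR (m : ℕ) {ν : ℕ → ℝ} (hνnn : ∀ k, 0 ≤ ν k) : ∀ n j, NN (DR m ν n j) := by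
  intro n
  induction n with
  | zero =>
    intro j
    rw [DR]
    refine nn_add (nn_mul (nn_C (hνnn j)) (nn_X 0)) ?_
    split
    · exact nn_X 1
    · exact nn_zero
  | succ n ih =>
    intro j
    rw [DR]
    refine nn_sum fun x _ => ?_
    split
    · exact nn_prod fun i _ => ih (x i)
    · exact nn_zero

lemma nn_Wc (m : ℕ) {ν : ℕ → ℝ} (hνnn : ∀ k, 0 ≤ ν k) (n : ℕ) : ∀ t s, NN (Wc m ν n t s) := by
  intro t
  induction t with
  | zero => intro s; rw [Wc]; exact nn_one
  | succ t ih =>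
    intro s
    rw [Wc]
    exact nn_sum fun v _ => nn_mul (nn_DR m hνnn n v) (ih (s - v))

lemma nn_cdfDR (m : ℕ) {ν : ℕ → ℝ} (hνnn : ∀ k, 0 ≤ ν k) (n j : ℕ) : NN (cdfDR m ν n j) :=
  nn_sum fun j' _ => nn_DR m hνnn n j'

lemma W_eq_big (m : ℕ) (ν : ℕ → ℝ) (n t s : ℕ) :
    Wc m ν n t s = ∑ x ∈ Fintype.piFinset (fun _ : Fin t => Finset.range (s+2)),
      if (∑ i, x i) ≤ s then ∏ i, DR m ν n (x i) else 0 := by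
  rw [W_eq]
  refine Finset.sum_subset (Fintype.piFinset_subset _ _ (fun _ => by
    intro z hz; rw [Finset.mem_range] at hz ⊢; omega)) ?_
  intro x _ hxn
  rw [if_neg]
  simp only [Fintype.mem_piFinset, Finset.mem_range, not_forall, not_lt] at hxn
  obtain ⟨i, hi⟩ := hxn
  have : s + 1 ≤ ∑ i, x i :=
    le_trans hi (Finset.single_le_sum (fun i _ => Nat.zero_le _) (Finset.mem_univ i))
  omega

lemma nn_Wc_diff (m : ℕ) {ν : ℕ → ℝ} (hνnn : ∀ k, 0 ≤ ν k) (n t s : ℕ) :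
    NN (Wc m ν n t (s+1) - Wc m ν n t s) := by
  rw [W_eq m ν n t (s+1), W_eq_big m ν n t s, ← Finset.sum_sub_distrib]
  refine nn_sum fun x _ => ?_
  by_cases hx : (∑ i, x i) ≤ s
  · rw [if_pos hx, if_pos (by omega : (∑ i, x i) ≤ s + 1), sub_self]
    exact nn_zero
  · by_cases hx1 : (∑ i, x i) ≤ s + 1
    · rw [if_pos hx1, if_neg hx, sub_zero]
      exact nn_prod fun i _ => nn_DR m hνnn n (x i)
    · rw [if_neg hx1, if_neg hx, sub_zero]
      exact nn_zero

-- ===== the core inequality =====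

theorem coreM (m : ℕ) (ν : ℕ → ℝ) (hνnn : ∀ k, 0 ≤ ν k)
    (hνsum1 : ∀ j : ℕ, ∑ j' ∈ Finset.range (j+1), ν j' ≤ 1)
    (a b : ℝ) (ha : 0 ≤ a) (hb : 0 < b) :
    ∀ n l r j, b^(l+r) * MvPolynomial.eval (fun i : Fin 2 => if i = 0 then a else b)
        (Dlr l r (cdfDR m ν n j))
      ≤ ((l+r).factorial : ℝ) * ((m:ℝ)^n)^(l+r)
          * MvPolynomial.eval (fun i : Fin 2 => if i = 0 then a else b) (cdfDR m ν n j) := by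
  set σab : Fin 2 → ℝ := fun i => if i = 0 then a else b with hσab
  have hσnn : ∀ i, 0 ≤ σab i := by
    intro i
    rw [hσab]
    dsimp only
    split
    · exact ha
    · exact hb.le
  have hσ0 : σab 0 = a := by simp [hσab]
  have hσ1 : σab 1 = b := by simp [hσab]
  intro n
  induction n with
  | zero =>
    intro l r j
    -- the base-case polynomial is affine
    have hcdf0 : cdfDR m ν 0 j
        = MvPolynomial.C (∑ j' ∈ range (j+1), ν j') * X 0 + X 1 := by
      rw [cdfDR]
      have : ∀ j' ∈ range (j+1), DR m ν 0 j'
          = MvPolynomial.C (ν j') * X 0 + if j' = 0 then X 1 else 0 := by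
        intro j' _; rw [DR]
      rw [Finset.sum_congr rfl this, Finset.sum_add_distrib]
      congr 1
      · rw [← Finset.sum_mul, ← map_sum]
      · rw [Finset.sum_ite_eq' (range (j+1)) 0 (fun _ => (X 1 : P2))]
        rw [if_pos (Finset.mem_range.mpr (Nat.succ_pos j))]
    set S := ∑ j' ∈ range (j+1), ν j' with hS
    have hSnn : 0 ≤ S := Finset.sum_nonneg fun j' _ => hνnn j'
    have hS1 : S ≤ 1 := hνsum1 j
    have hev : MvPolynomial.eval σab (cdfDR m ν 0 j) = S * a + b := by
      rw [hcdf0]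
      simp [hσ0, hσ1]
    have hevnn : 0 ≤ S * a + b := by positivity
    have hd1 : pderiv (1 : Fin 2) (cdfDR m ν 0 j) = 1 := by
      rw [hcdf0]
      rw [map_add, pderiv_C_mul, pderiv_X_of_ne (by decide : (0:Fin 2) ≠ 1), pderiv_X_self]
      simp
    have hd0 : pderiv (0 : Fin 2) (cdfDR m ν 0 j) = MvPolynomial.C S := by
      rw [hcdf0]
      rw [map_add, pderiv_C_mul, pderiv_X_self, pderiv_X_of_ne (by decide : (1:Fin 2) ≠ 0)]
      simp
    have hpow1 : ((m:ℝ)^0)^(l+r) = 1 := by norm_num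
    rcases r with _ | r
    · rcases l with _ | l
      · -- l = r = 0
        simp only [Dlr, Function.iterate_zero, id_eq, Nat.add_zero, pow_zero,
          Nat.factorial_zero, Nat.cast_one, hpow1]
        rw [hev]; nlinarith
      · -- r = 0, l ≥ 1
        have hD : Dlr (l+1) 0 (cdfDR m ν 0 j)
            = (⇑(pderiv (0:Fin 2)))^[l] (MvPolynomial.C S) := by
          simp only [Dlr, Function.iterate_zero, id_eq]
          rw [Function.iterate_succ_apply, hd0]
        rcases l with _ | l
        · -- l = 1
          simp only [hD, Function.iterate_zero, id_eq]
          rw [hev, eval_C, hpow1]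
          simp only [Nat.add_zero, Nat.factorial_one, Nat.cast_one, pow_one]
          nlinarith
        · -- l ≥ 2
          rw [hD, Function.iterate_succ_apply, pderiv_C, pditer_zero, map_zero, mul_zero]
          have : 0 ≤ MvPolynomial.eval σab (cdfDR m ν 0 j) :=
            nn_eval hσnn (nn_cdfDR m hνnn 0 j)
          positivity
    · -- r ≥ 1
      have hDin : (⇑(pderiv (1:Fin 2)))^[r+1] (cdfDR m ν 0 j) = (⇑(pderiv (1:Fin 2)))^[r] 1 := by
        rw [Function.iterate_succ_apply, hd1]
      rcases r with _ | r
      · -- r = 1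
        rcases l with _ | l
        · -- l = 0, r = 1
          simp only [Dlr, Function.iterate_zero, id_eq] at hDin ⊢
          rw [hDin, map_one, mul_one, hev, hpow1]
          simp only [Nat.zero_add, Nat.factorial_one, Nat.cast_one, pow_one]
          nlinarith
        · -- l ≥ 1, r = 1
          simp only [Dlr] at hDin ⊢
          rw [hDin]
          simp only [Function.iterate_zero, id_eq]
          rw [pditer_one 0 (l+1) (by omega), map_zero, mul_zero]
          have : 0 ≤ MvPolynomial.eval σab (cdfDR m ν 0 j) :=
            nn_eval hσnn (nn_cdfDR m hνnn 0 j)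
          positivity
      · -- r ≥ 2
        simp only [Dlr] at hDin ⊢
        rw [hDin, pditer_one 1 (r+1) (by omega), pditer_zero, map_zero, mul_zero]
        have : 0 ≤ MvPolynomial.eval σab (cdfDR m ν 0 j) :=
          nn_eval hσnn (nn_cdfDR m hνnn 0 j)
        positivity
  | succ n ih =>
    -- the key claim for the convolution polynomials
    have hG : ∀ t, ∀ l r s, b^(l+r) * MvPolynomial.eval σab (Dlr l r (Wc m ν n t s))
        ≤ ((l+r).factorial : ℝ) * ((m:ℝ)^n)^(l+r) * ((t:ℝ))^(l+r)
          * MvPolynomial.eval σab (Wc m ν n t s) := by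
      intro t
      induction t with
      | zero =>
        intro l r s
        rw [Wc]
        rcases Nat.eq_zero_or_pos (l + r) with h | h
        · obtain ⟨hl, hr⟩ : l = 0 ∧ r = 0 := by omega
          subst hl; subst hr
          simp [Dlr]
        · have hD : Dlr l r (1 : P2) = 0 := by
            rcases Nat.eq_zero_or_pos r with hr | hr
            · subst hr
              simp only [Dlr, Function.iterate_zero, id_eq]
              exact pditer_one 0 l (by omega)
            · simp only [Dlr]
              rw [pditer_one 1 r hr, pditer_zero]
          rw [hD, map_zero, mul_zero]
          rw [Nat.cast_zero, zero_pow (by omega : l + r ≠ 0)]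
          simp
      | succ t iht =>
        intro l r s
        -- expand via Leibniz
        have hDlrW : MvPolynomial.eval σab (Dlr l r (Wc m ν n (t+1) s))
            = ∑ q ∈ range (r+1), ∑ i ∈ range (l+1),
                ((r.choose q * l.choose i : ℕ) : ℝ) *
                ∑ v ∈ range (s+1),
                  MvPolynomial.eval σab (Dlr (l-i) (r-q) (DR m ν n v)) *
                  MvPolynomial.eval σab (Dlr i q (Wc m ν n t (s-v))) := by
          have h1 : ∀ v, MvPolynomial.eval σab (Dlr l r (DR m ν n v * Wc m ν n t (s-v)))
              = ∑ q ∈ range (r+1), ∑ i ∈ range (l+1),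
                  ((r.choose q * l.choose i : ℕ) : ℝ) *
                  (MvPolynomial.eval σab (Dlr (l-i) (r-q) (DR m ν n v)) *
                   MvPolynomial.eval σab (Dlr i q (Wc m ν n t (s-v)))) := by
            intro v
            rw [Dlr_mul, map_sum]
            refine Finset.sum_congr rfl fun q _ => ?_
            rw [map_sum]
            refine Finset.sum_congr rfl fun i _ => ?_
            rw [map_nsmul, map_mul, nsmul_eq_mul]
          calc MvPolynomial.eval σab (Dlr l r (Wc m ν n (t+1) s))
              = ∑ v ∈ range (s+1),
                  MvPolynomial.eval σab (Dlr l r (DR m ν n v * Wc m ν n t (s-v))) := by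
                rw [Wc, Dlr_sum, map_sum]
            _ = ∑ v ∈ range (s+1), ∑ q ∈ range (r+1), ∑ i ∈ range (l+1),
                  ((r.choose q * l.choose i : ℕ) : ℝ) *
                  (MvPolynomial.eval σab (Dlr (l-i) (r-q) (DR m ν n v)) *
                   MvPolynomial.eval σab (Dlr i q (Wc m ν n t (s-v)))) :=
                Finset.sum_congr rfl fun v _ => h1 v
            _ = ∑ q ∈ range (r+1), ∑ v ∈ range (s+1), ∑ i ∈ range (l+1),
                  ((r.choose q * l.choose i : ℕ) : ℝ) *
                  (MvPolynomial.eval σab (Dlr (l-i) (r-q) (DR m ν n v)) *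
                   MvPolynomial.eval σab (Dlr i q (Wc m ν n t (s-v)))) :=
                Finset.sum_comm
            _ = ∑ q ∈ range (r+1), ∑ i ∈ range (l+1), ∑ v ∈ range (s+1),
                  ((r.choose q * l.choose i : ℕ) : ℝ) *
                  (MvPolynomial.eval σab (Dlr (l-i) (r-q) (DR m ν n v)) *
                   MvPolynomial.eval σab (Dlr i q (Wc m ν n t (s-v)))) :=
                Finset.sum_congr rfl fun q _ => Finset.sum_comm
            _ = _ := by
                refine Finset.sum_congr rfl fun q _ => Finset.sum_congr rfl fun i _ => ?_
                rw [Finset.mul_sum]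
        -- pointwise bound for each (q, i)
        have hbound : ∀ q ∈ range (r+1), ∀ i ∈ range (l+1),
            ∑ v ∈ range (s+1),
              MvPolynomial.eval σab (Dlr (l-i) (r-q) (DR m ν n v)) *
              MvPolynomial.eval σab (Dlr i q (Wc m ν n t (s-v)))
            ≤ ((((l-i)+(r-q)).factorial : ℝ) * ((m:ℝ)^n)^((l-i)+(r-q)) / b^((l-i)+(r-q)))
              * ((((i+q).factorial : ℝ) * ((m:ℝ)^n)^(i+q) * (t:ℝ)^(i+q) / b^(i+q))
                  * MvPolynomial.eval σab (Wc m ν n (t+1) s)) := by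
          intro q hq i hi
          rw [Finset.mem_range] at hq hi
          have hc : ∀ V : ℕ, ∑ v ∈ range (V+1),
              MvPolynomial.eval σab (Dlr (l-i) (r-q) (DR m ν n v))
              ≤ ((((l-i)+(r-q)).factorial : ℝ) * ((m:ℝ)^n)^((l-i)+(r-q)) / b^((l-i)+(r-q)))
                * ∑ v ∈ range (V+1), MvPolynomial.eval σab (DR m ν n v) := by
            intro V
            have h2 := ih (l-i) (r-q) V
            have hsA : ∑ v ∈ range (V+1), MvPolynomial.eval σab (Dlr (l-i) (r-q) (DR m ν n v))
                = MvPolynomial.eval σab (Dlr (l-i) (r-q) (cdfDR m ν n V)) := by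
              rw [cdfDR, Dlr_sum, map_sum]
            have hsB : ∑ v ∈ range (V+1), MvPolynomial.eval σab (DR m ν n v)
                = MvPolynomial.eval σab (cdfDR m ν n V) := by
              rw [cdfDR, map_sum]
            rw [hsA, hsB]
            rw [div_mul_eq_mul_div, le_div_iff₀ (pow_pos hb _)]
            calc MvPolynomial.eval σab (Dlr (l-i) (r-q) (cdfDR m ν n V)) * b^((l-i)+(r-q))
                = b^((l-i)+(r-q)) * MvPolynomial.eval σab (Dlr (l-i) (r-q) (cdfDR m ν n V)) := by
                  ring
              _ ≤ _ := h2
          have hB0 : 0 ≤ MvPolynomial.eval σab (Dlr i q (Wc m ν n t 0)) :=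
            nn_eval hσnn (nn_Dlr i q (nn_Wc m hνnn n t 0))
          have hBmono : ∀ u, MvPolynomial.eval σab (Dlr i q (Wc m ν n t u))
              ≤ MvPolynomial.eval σab (Dlr i q (Wc m ν n t (u+1))) := by
            intro u
            have hd := nn_Wc_diff m hνnn n t u
            have h3 : 0 ≤ MvPolynomial.eval σab (Dlr i q (Wc m ν n t (u+1) - Wc m ν n t u)) :=
              nn_eval hσnn (nn_Dlr i q hd)
            rw [Dlr_sub, map_sub] at h3
            linarith
          have habel := abel_replace _
            (fun v => MvPolynomial.eval σab (Dlr (l-i) (r-q) (DR m ν n v)))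
            (fun v => MvPolynomial.eval σab (DR m ν n v)) hc s
            (fun u => MvPolynomial.eval σab (Dlr i q (Wc m ν n t u))) hB0 hBmono
          refine le_trans habel ?_
          refine mul_le_mul_of_nonneg_left ?_ (by positivity)
          -- pointwise application of the inner induction hypothesis
          have hpoint : ∑ v ∈ range (s+1),
              MvPolynomial.eval σab (DR m ν n v) *
              MvPolynomial.eval σab (Dlr i q (Wc m ν n t (s-v)))
              ≤ ((((i+q).factorial : ℝ) * ((m:ℝ)^n)^(i+q) * (t:ℝ)^(i+q) / b^(i+q)))
                * ∑ v ∈ range (s+1),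
                    MvPolynomial.eval σab (DR m ν n v) *
                    MvPolynomial.eval σab (Wc m ν n t (s-v)) := by
            rw [Finset.mul_sum]
            refine Finset.sum_le_sum fun v _ => ?_
            have hgt := iht i q (s - v)
            have hDRnn : 0 ≤ MvPolynomial.eval σab (DR m ν n v) :=
              nn_eval hσnn (nn_DR m hνnn n v)
            have hBle : MvPolynomial.eval σab (Dlr i q (Wc m ν n t (s-v)))
                ≤ (((i+q).factorial : ℝ) * ((m:ℝ)^n)^(i+q) * (t:ℝ)^(i+q) / b^(i+q))
                  * MvPolynomial.eval σab (Wc m ν n t (s-v)) := by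
              rw [div_mul_eq_mul_div, le_div_iff₀ (pow_pos hb _)]
              calc MvPolynomial.eval σab (Dlr i q (Wc m ν n t (s-v))) * b^(i+q)
                  = b^(i+q) * MvPolynomial.eval σab (Dlr i q (Wc m ν n t (s-v))) := by ring
                _ ≤ _ := hgt
            calc MvPolynomial.eval σab (DR m ν n v) *
                MvPolynomial.eval σab (Dlr i q (Wc m ν n t (s-v)))
                ≤ MvPolynomial.eval σab (DR m ν n v) *
                  ((((i+q).factorial : ℝ) * ((m:ℝ)^n)^(i+q) * (t:ℝ)^(i+q) / b^(i+q))
                    * MvPolynomial.eval σab (Wc m ν n t (s-v))) :=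
                  mul_le_mul_of_nonneg_left hBle hDRnn
              _ = (((i+q).factorial : ℝ) * ((m:ℝ)^n)^(i+q) * (t:ℝ)^(i+q) / b^(i+q))
                  * (MvPolynomial.eval σab (DR m ν n v) *
                     MvPolynomial.eval σab (Wc m ν n t (s-v))) := by ring
          refine le_trans hpoint ?_
          have hWsum : ∑ v ∈ range (s+1),
              MvPolynomial.eval σab (DR m ν n v) * MvPolynomial.eval σab (Wc m ν n t (s-v))
              = MvPolynomial.eval σab (Wc m ν n (t+1) s) := by
            rw [Wc, map_sum]
            exact Finset.sum_congr rfl fun v _ => (map_mul _ _ _).symm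
          rw [hWsum]
        -- combine everything
        rw [hDlrW]
        have hEnn : 0 ≤ MvPolynomial.eval σab (Wc m ν n (t+1) s) :=
          nn_eval hσnn (nn_Wc m hνnn n (t+1) s)
        calc b^(l+r) * ∑ q ∈ range (r+1), ∑ i ∈ range (l+1),
              ((r.choose q * l.choose i : ℕ) : ℝ) *
              ∑ v ∈ range (s+1),
                MvPolynomial.eval σab (Dlr (l-i) (r-q) (DR m ν n v)) *
                MvPolynomial.eval σab (Dlr i q (Wc m ν n t (s-v)))
            ≤ b^(l+r) * ∑ q ∈ range (r+1), ∑ i ∈ range (l+1),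
              ((r.choose q * l.choose i : ℕ) : ℝ) *
              (((((l-i)+(r-q)).factorial : ℝ) * ((m:ℝ)^n)^((l-i)+(r-q)) / b^((l-i)+(r-q)))
                * ((((i+q).factorial : ℝ) * ((m:ℝ)^n)^(i+q) * (t:ℝ)^(i+q) / b^(i+q))
                    * MvPolynomial.eval σab (Wc m ν n (t+1) s))) := by
              refine mul_le_mul_of_nonneg_left ?_ (by positivity)
              refine Finset.sum_le_sum fun q hq => Finset.sum_le_sum fun i hi => ?_
              exact mul_le_mul_of_nonneg_left (hbound q hq i hi) (Nat.cast_nonneg _)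
          _ = (∑ q ∈ range (r+1), ∑ i ∈ range (l+1),
                ((l.choose i : ℝ) * (r.choose q) * ((i+q).factorial)
                  * ((l+r-(i+q)).factorial) * (t:ℝ)^(i+q)))
              * (((m:ℝ)^n)^(l+r) * MvPolynomial.eval σab (Wc m ν n (t+1) s)) := by
              rw [Finset.mul_sum, Finset.sum_mul]
              refine Finset.sum_congr rfl fun q hq => ?_
              rw [Finset.mul_sum, Finset.sum_mul]
              refine Finset.sum_congr rfl fun i hi => ?_
              rw [Finset.mem_range] at hq hi
              have e1 : (l-i) + (r-q) = l+r-(i+q) := by omega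
              have e2 : (l+r-(i+q)) + (i+q) = l+r := by omega
              have hb2 : (b:ℝ)^(l+r) = b^(l+r-(i+q)) * b^(i+q) := by rw [← pow_add, e2]
              have hm2 : ((m:ℝ)^n)^(l+r) = ((m:ℝ)^n)^(l+r-(i+q)) * ((m:ℝ)^n)^(i+q) := by
                rw [← pow_add, e2]
              rw [e1, hb2, hm2]
              have hbne : (b:ℝ) ≠ 0 := ne_of_gt hb
              push_cast
              field_simp
          _ ≤ (((l+r).factorial : ℝ) * ((t:ℝ)+1)^(l+r))
              * (((m:ℝ)^n)^(l+r) * MvPolynomial.eval σab (Wc m ν n (t+1) s)) := by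
              refine mul_le_mul_of_nonneg_right ?_ (by positivity)
              calc (∑ q ∈ range (r+1), ∑ i ∈ range (l+1),
                    ((l.choose i : ℝ) * (r.choose q) * ((i+q).factorial)
                      * ((l+r-(i+q)).factorial) * (t:ℝ)^(i+q)))
                  = ∑ i ∈ range (l+1), ∑ q ∈ range (r+1),
                    ((l.choose i : ℝ) * (r.choose q) * ((i+q).factorial)
                      * ((l+r-(i+q)).factorial) * (t:ℝ)^(i+q)) := Finset.sum_comm
                _ ≤ ((l+r).factorial : ℝ) * ((t:ℝ)+1)^(l+r) := coeff_bound l r t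
          _ = ((l+r).factorial : ℝ) * ((m:ℝ)^n)^(l+r) * (((t:ℕ)+1 : ℕ) : ℝ)^(l+r)
              * MvPolynomial.eval σab (Wc m ν n (t+1) s) := by
              push_cast
              ring
    intro l r j
    rw [cdfDR_succ_eq_W m ν n j]
    refine le_trans (hG m l r (j+1)) (le_of_eq ?_)
    have hpow : ((m:ℝ)^n)^(l+r) * ((m:ℝ))^(l+r) = ((m:ℝ)^(n+1))^(l+r) := by
      rw [← mul_pow, ← pow_succ]
    rw [← hpow]
    ring
-- ===== substitution q ↦ (q, 1-q) =====

lemma fin2_cases (i : Fin 2) : i = 0 ∨ i = 1 := by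
  rcases i with ⟨iv, hv⟩
  interval_cases iv
  · exact Or.inl rfl
  · exact Or.inr rfl

def gPoly : Fin 2 → Polynomial ℝ := fun i => if i = 0 then Polynomial.X else 1 - Polynomial.X

def ψ : P2 →ₐ[ℝ] Polynomial ℝ := MvPolynomial.aeval gPoly

lemma eval_psi (q : ℝ) : ∀ Q : P2, Polynomial.eval q (ψ Q)
    = MvPolynomial.eval (fun i : Fin 2 => if i = 0 then q else 1 - q) Q := by
  intro Q
  induction Q using MvPolynomial.induction_on with
  | C a => simp [ψ]
  | add p q hp hq => simp [map_add, hp, hq]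
  | mul_X p i hp =>
    rw [map_mul, Polynomial.eval_mul, hp, map_mul]
    congr 1
    rcases fin2_cases i with rfl | rfl
    · have h1 : ψ (X 0) = Polynomial.X := by simp [ψ, gPoly]
      rw [h1]; simp
    · have h1 : ψ (X 1) = 1 - Polynomial.X := by simp [ψ, gPoly]
      rw [h1]; simp

lemma deriv_psi : ∀ Q : P2, Polynomial.derivative (ψ Q)
    = ψ (pderiv 0 Q) - ψ (pderiv 1 Q) := by
  intro Q
  induction Q using MvPolynomial.induction_on with
  | C a => simp [ψ, pderiv_C]
  | add p q hp hq => simp only [map_add, Polynomial.derivative_add, hp, hq]; ring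
  | mul_X p i hp =>
    rcases fin2_cases i with rfl | rfl
    · have h1 : ψ (X 0) = Polynomial.X := by simp [ψ, gPoly]
      rw [map_mul, Polynomial.derivative_mul, hp, pderiv_mul, pderiv_mul,
        pderiv_X_self, pderiv_X_of_ne (by decide : (0:Fin 2) ≠ 1)]
      simp only [map_add, map_mul, map_zero, map_one, h1, Polynomial.derivative_X,
        mul_zero, mul_one, add_zero]
      ring
    · have h1 : ψ (X 1) = 1 - Polynomial.X := by simp [ψ, gPoly]
      rw [map_mul, Polynomial.derivative_mul, hp, pderiv_mul, pderiv_mul,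
        pderiv_X_self, pderiv_X_of_ne (by decide : (1:Fin 2) ≠ 0)]
      simp only [map_add, map_mul, map_zero, map_one, h1, Polynomial.derivative_sub,
        Polynomial.derivative_one, Polynomial.derivative_X, mul_zero, mul_one, add_zero]
      ring

def pd0 : Module.End ℝ P2 := (pderiv (0 : Fin 2)).toLinearMap
def pd1 : Module.End ℝ P2 := (pderiv (1 : Fin 2)).toLinearMap

lemma pd0_apply (Q : P2) : pd0 Q = pderiv 0 Q := rfl
lemma pd1_apply (Q : P2) : pd1 Q = pderiv 1 Q := rfl

lemma hcomm : Commute pd0 pd1 := by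
  refine LinearMap.ext fun Q => ?_
  show (pd0 * pd1) Q = (pd1 * pd0) Q
  rw [Module.End.mul_apply, Module.End.mul_apply, pd0_apply, pd1_apply, pd0_apply, pd1_apply]
  exact pderiv_comm01 Q

lemma pd0_pow_apply (l : ℕ) (Q : P2) : (pd0 ^ l) Q = (⇑(pderiv (0:Fin 2)))^[l] Q := by
  rw [Module.End.pow_apply]
  rfl

lemma pd1_pow_apply (l : ℕ) (Q : P2) : (pd1 ^ l) Q = (⇑(pderiv (1:Fin 2)))^[l] Q := by
  rw [Module.End.pow_apply]
  rfl

lemma iterate_deriv_psi : ∀ (k : ℕ) (Q : P2),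
    (⇑Polynomial.derivative)^[k] (ψ Q) = ψ (((pd0 - pd1) ^ k) Q) := by
  intro k
  induction k with
  | zero => intro Q; simp
  | succ k ih =>
    intro Q
    rw [Function.iterate_succ_apply]
    have h1 : Polynomial.derivative (ψ Q) = ψ ((pd0 - pd1) Q) := by
      rw [deriv_psi, LinearMap.sub_apply, map_sub, pd0_apply, pd1_apply]
    rw [h1, ih, pow_succ, Module.End.mul_apply]

lemma negpow_apply (j : ℕ) (Q : P2) : ((-pd1) ^ j) Q = ((-1:ℝ)^j) • ((pd1 ^ j) Q) := by
  induction j generalizing Q with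
  | zero => simp
  | succ j ih =>
    calc ((-pd1)^(j+1)) Q = ((-pd1)^j) ((-pd1) Q) := by rw [pow_succ, Module.End.mul_apply]
      _ = ((-pd1)^j) (-(pd1 Q)) := by rw [LinearMap.neg_apply]
      _ = -(((-pd1)^j) (pd1 Q)) := by rw [map_neg]
      _ = -(((-1:ℝ)^j) • ((pd1^j) (pd1 Q))) := by rw [ih]
      _ = ((-1:ℝ)^(j+1)) • ((pd1^j) (pd1 Q)) := by
          rw [← neg_smul]
          congr 1
          rw [pow_succ]
          ring
      _ = ((-1:ℝ)^(j+1)) • ((pd1^(j+1)) Q) := by rw [pow_succ pd1 j, Module.End.mul_apply]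

lemma itd_poly : ∀ (k : ℕ) (R : Polynomial ℝ),
    iteratedDeriv k (fun q : ℝ => Polynomial.eval q R)
      = fun p => Polynomial.eval p ((⇑Polynomial.derivative)^[k] R) := by
  intro k
  induction k with
  | zero =>
    intro R
    rw [iteratedDeriv_zero]
    rfl
  | succ k ih =>
    intro R
    rw [iteratedDeriv_succ, ih]
    funext p
    rw [Function.iterate_succ_apply']
    exact Polynomial.deriv (𝕜 := ℝ) _

/-- Proposition 2.2 (1). Fix `δ ∈ (0, 1/2)` and assume
`c_2 = E(m^{(1-δ)X_0^*}) < ∞`. Then for every `p ∈ (0,1)`, `k ≥ 1` and `n ≥ 1`,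
`|dᵏ/dpᵏ P(X_n = 0)| ≤ 2^k k! m^{kn} P(X_n = 0)/(1-p)^k`. -/
theorem deriv_PXn_zero_bound_one
    (m : ℕ) (hm : 2 ≤ m) (ν : ℕ → ℝ)
    (hν0 : ν 0 = 0) (hνnn : ∀ k, 0 ≤ ν k) (hνsum : ∑' k, ν k = 1)
    (δ : ℝ) (hδ : δ ∈ Set.Ioo (0 : ℝ) (1 / 2))
    (hc2 : Summable fun j : ℕ => ν j * (m : ℝ) ^ ((1 - δ) * (j : ℝ)))
    (p : ℝ) (hp : p ∈ Set.Ioo (0 : ℝ) 1)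
    (k : ℕ) (hk : 1 ≤ k) (n : ℕ) (hn : 1 ≤ n) :
    |iteratedDeriv k (fun q => drLaw m ν q n 0) p| ≤
      2 ^ k * (k.factorial : ℝ) * (m : ℝ) ^ (k * n) * drLaw m ν p n 0 / (1 - p) ^ k := by
  obtain ⟨hp0, hp1⟩ := hp
  have hb : (0:ℝ) < 1 - p := by linarith
  have hsummable : Summable ν := by
    by_contra h
    rw [tsum_eq_zero_of_not_summable h] at hνsum
    norm_num at hνsum
  have hνsum1 : ∀ j : ℕ, ∑ j' ∈ Finset.range (j+1), ν j' ≤ 1 := by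
    intro j
    calc ∑ j' ∈ Finset.range (j+1), ν j'
        ≤ ∑' j', ν j' := Summable.sum_le_tsum _ (fun i _ => hνnn i) hsummable
      _ = 1 := hνsum
  have hσnn : ∀ i : Fin 2, 0 ≤ (fun i : Fin 2 => if i = 0 then p else 1 - p) i := by
    intro i
    dsimp only
    split
    · exact hp0.le
    · exact hb.le
  -- identify the function with a polynomial evaluation
  have hfun : (fun q => drLaw m ν q n 0) = fun q : ℝ => Polynomial.eval q (ψ (DR m ν n 0)) := by
    funext q
    rw [eval_DR m ν q n 0, eval_psi]
  rw [hfun, itd_poly k (ψ (DR m ν n 0)), iterate_deriv_psi k (DR m ν n 0)]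
  have hbinom : (pd0 - pd1)^k = ∑ l ∈ Finset.range (k+1),
      pd0^l * (-pd1)^(k-l) * ((k.choose l : ℕ) : Module.End ℝ P2) := by
    rw [sub_eq_add_neg]
    exact Commute.add_pow (hcomm.neg_right) k
  have hval : Polynomial.eval p (ψ (((pd0 - pd1)^k) (DR m ν n 0)))
      = ∑ l ∈ Finset.range (k+1), ((-1:ℝ)^(k-l) * (k.choose l)) *
          MvPolynomial.eval (fun i : Fin 2 => if i = 0 then p else 1 - p)
            (Dlr l (k-l) (DR m ν n 0)) := by
    rw [hbinom, LinearMap.sum_apply, map_sum, Polynomial.eval_finset_sum]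
    refine Finset.sum_congr rfl fun l _ => ?_
    have h1 : (pd0^l * (-pd1)^(k-l) * ((k.choose l : ℕ) : Module.End ℝ P2)) (DR m ν n 0)
        = ((-1:ℝ)^(k-l) * (k.choose l)) • (Dlr l (k-l) (DR m ν n 0)) := by
      rw [Module.End.mul_apply, Module.End.mul_apply, Module.End.natCast_apply,
        ← Nat.cast_smul_eq_nsmul ℝ, map_smul, negpow_apply, map_smul, map_smul,
        pd0_pow_apply, pd1_pow_apply]
      rw [smul_smul, mul_comm ((k.choose l : ℝ)) _]
      rfl
    rw [h1, map_smul, Polynomial.eval_smul, smul_eq_mul, eval_psi]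
  change |Polynomial.eval p (ψ (((pd0 - pd1) ^ k) (DR m ν n 0)))| ≤ _
  rw [hval]
  have hcdf00 : cdfDR m ν n 0 = DR m ν n 0 := by
    rw [cdfDR, Finset.sum_range_one]
  have hcore := coreM m ν hνnn hνsum1 p (1-p) hp0.le hb n
  have hpos : (0:ℝ) < (1-p)^k := pow_pos hb k
  have hterm : ∀ l ∈ Finset.range (k+1),
      |((-1:ℝ)^(k-l) * (k.choose l)) *
        MvPolynomial.eval (fun i : Fin 2 => if i = 0 then p else 1 - p)
          (Dlr l (k-l) (DR m ν n 0))|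
      ≤ (k.choose l : ℝ) * ((k.factorial : ℝ) * ((m:ℝ)^n)^k *
          MvPolynomial.eval (fun i : Fin 2 => if i = 0 then p else 1 - p) (DR m ν n 0)
          / (1-p)^k) := by
    intro l hl
    rw [Finset.mem_range] at hl
    have hlk : l + (k - l) = k := by omega
    have hnn : 0 ≤ MvPolynomial.eval (fun i : Fin 2 => if i = 0 then p else 1 - p)
        (Dlr l (k-l) (DR m ν n 0)) :=
      nn_eval hσnn (nn_Dlr _ _ (nn_DR m hνnn n 0))
    rw [abs_mul, abs_mul, abs_pow, abs_neg, abs_one, one_pow, one_mul,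
      Nat.abs_cast, abs_of_nonneg hnn]
    have h2 := hcore l (k-l) 0
    rw [hcdf00, hlk] at h2
    have h3 : MvPolynomial.eval (fun i : Fin 2 => if i = 0 then p else 1 - p)
        (Dlr l (k-l) (DR m ν n 0))
        ≤ (k.factorial : ℝ) * ((m:ℝ)^n)^k *
          MvPolynomial.eval (fun i : Fin 2 => if i = 0 then p else 1 - p) (DR m ν n 0)
          / (1-p)^k := by
      rw [le_div_iff₀ hpos]
      calc MvPolynomial.eval (fun i : Fin 2 => if i = 0 then p else 1 - p)
            (Dlr l (k-l) (DR m ν n 0)) * (1-p)^k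
          = (1-p)^k * MvPolynomial.eval (fun i : Fin 2 => if i = 0 then p else 1 - p)
            (Dlr l (k-l) (DR m ν n 0)) := mul_comm _ _
        _ ≤ _ := h2
    exact mul_le_mul_of_nonneg_left h3 (Nat.cast_nonneg _)
  calc |∑ l ∈ Finset.range (k+1), ((-1:ℝ)^(k-l) * (k.choose l)) *
        MvPolynomial.eval (fun i : Fin 2 => if i = 0 then p else 1 - p)
          (Dlr l (k-l) (DR m ν n 0))|
      ≤ ∑ l ∈ Finset.range (k+1), |((-1:ℝ)^(k-l) * (k.choose l)) *
          MvPolynomial.eval (fun i : Fin 2 => if i = 0 then p else 1 - p)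
            (Dlr l (k-l) (DR m ν n 0))| := Finset.abs_sum_le_sum_abs _ _
    _ ≤ ∑ l ∈ Finset.range (k+1), (k.choose l : ℝ) * ((k.factorial : ℝ) * ((m:ℝ)^n)^k *
          MvPolynomial.eval (fun i : Fin 2 => if i = 0 then p else 1 - p) (DR m ν n 0)
          / (1-p)^k) := Finset.sum_le_sum hterm
    _ = (∑ l ∈ Finset.range (k+1), (k.choose l : ℝ)) * ((k.factorial : ℝ) * ((m:ℝ)^n)^k *
          MvPolynomial.eval (fun i : Fin 2 => if i = 0 then p else 1 - p) (DR m ν n 0)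
          / (1-p)^k) := by rw [← Finset.sum_mul]
    _ = (2^k : ℝ) * ((k.factorial : ℝ) * ((m:ℝ)^n)^k *
          MvPolynomial.eval (fun i : Fin 2 => if i = 0 then p else 1 - p) (DR m ν n 0)
          / (1-p)^k) := by
        have hch : (∑ l ∈ Finset.range (k+1), (k.choose l : ℝ)) = (2^k : ℝ) := by
          have := Nat.sum_range_choose k
          calc (∑ l ∈ Finset.range (k+1), (k.choose l : ℝ))
              = ((∑ l ∈ Finset.range (k+1), k.choose l : ℕ) : ℝ) := by push_cast; rfl
            _ = (2^k : ℝ) := by rw [this]; push_cast; rfl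
        rw [hch]
    _ = 2 ^ k * (k.factorial : ℝ) * (m : ℝ) ^ (k * n) * drLaw m ν p n 0 / (1 - p) ^ k := by
        rw [show drLaw m ν p n 0 = MvPolynomial.eval
          (fun i : Fin 2 => if i = 0 then p else 1 - p) (DR m ν n 0) from eval_DR m ν p n 0]
        have hmp : ((m:ℝ)^n)^k = (m:ℝ)^(k*n) := by
          rw [← pow_mul, mul_comm]
        rw [← hmp]
        ring
end
end

section
/- For every integer k ≥ 1, every integer n ≥ 0 and every p ∈ (0,1), |d^k/dp^k P(X_n = 0)| ≤ (2^k · k!/(1−p)^k) · Σ_{A ⊆ leaves, |A| = k} P( ∇^A 1_{{X(e_n)=0}} ≠ 0 and X(v)=0 for all v ∈ A ). -/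
noncomputable section

/-- The value at the root of the depth-`n` `m`-ary tree determined by the leaf values
`f` via the Derrida–Retaux rule `X(w) = (X(1w) + ⋯ + X(mw) - 1)⁺`; the root branches
according to the last letter of a leaf word (truncated ℕ-subtraction realizes the
positive part). -/
def rootVal (m : ℕ) : (n : ℕ) → ((Fin n → Fin m) → ℕ) → ℕ
  | 0, f => f Fin.elim0
  | n + 1, f => (∑ a : Fin m, rootVal m n (fun w => f (Fin.snoc w a))) - 1

/-- A configuration `ω` assigns to each leaf `v` a pair `(X_0^*(v), U(v))`;
`cfgWeight` is its probability weight under the product law. -/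
def cfgWeight (m n : ℕ) (ν : ℕ → ℝ) (p : ℝ) (ω : (Fin n → Fin m) → ℕ × Bool) : ℝ :=
  ∏ v : Fin n → Fin m, (ν (ω v).1 * (if (ω v).2 then p else 1 - p))

/-- The leaf values `X(v) = X_0^*(v)·U(v)` of a configuration. -/
def cfgLeaf {m n : ℕ} (ω : (Fin n → Fin m) → ℕ × Bool) : (Fin n → Fin m) → ℕ :=
  fun v => if (ω v).2 then (ω v).1 else 0

/-- `Θ^B X`: the leaf configuration equal to `X(v)` off `B` and to `X_0^*(v)` on `B`. -/
def cfgTheta {m n : ℕ} (ω : (Fin n → Fin m) → ℕ × Bool)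
    (B : Finset (Fin n → Fin m)) : (Fin n → Fin m) → ℕ :=
  fun v => if v ∈ B then (ω v).1 else cfgLeaf ω v

/-- `∇^A f(X) = Σ_{B ⊆ A} (-1)^{|A|-|B|} f(Θ^B X)`. -/
def cfgNabla {m n : ℕ} (ω : (Fin n → Fin m) → ℕ × Bool)
    (A : Finset (Fin n → Fin m)) (f : ((Fin n → Fin m) → ℕ) → ℝ) : ℝ :=
  ∑ B ∈ A.powerset, (-1 : ℝ) ^ (A.card - B.card) * f (cfgTheta ω B)

open Finset

-- AUX
lemma summable_pi_fin {κ : Type*} (c : κ → ℝ) (hnn : ∀ z, 0 ≤ c z) (hc : Summable c)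
    (N : ℕ) : Summable (fun f : Fin N → κ => ∏ i, c (f i)) := by
  induction N with
  | zero =>
      have h1 : (fun f : Fin 0 → κ => ∏ i, c (f i)) = fun _ => (1 : ℝ) := by
        funext f; simp
      rw [h1]
      exact (hasSum_single (f := fun _ : Fin 0 → κ => (1:ℝ)) default
        (fun b hb => absurd (Subsingleton.elim b default) hb)).summable
  | succ N ih =>
      have h2 := hc.mul_of_nonneg ih (Pi.le_def.mpr fun z => hnn z)
        (Pi.le_def.mpr fun f => Finset.prod_nonneg fun i _ => hnn _)
      let e : κ × (Fin N → κ) ≃ (Fin (N + 1) → κ) :=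
        ⟨fun p => Fin.cons p.1 p.2, fun g => (g 0, Fin.tail g),
          fun p => by simp, fun g => by simp⟩
      rw [← e.summable_iff]
      have h3 : ((fun f : Fin (N+1) → κ => ∏ i, c (f i)) ∘ e)
          = fun p : κ × (Fin N → κ) => c p.1 * ∏ i, c (p.2 i) := by
        funext p
        simp [e, Fin.prod_univ_succ]
      rw [h3]; exact h2

lemma summable_pi {V : Type*} [Fintype V] {κ : Type*} (c : κ → ℝ)
    (hnn : ∀ z, 0 ≤ c z) (hc : Summable c) :
    Summable (fun f : V → κ => ∏ v, c (f v)) := by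
  let e := Fintype.equivFin V
  let E : (Fin (Fintype.card V) → κ) ≃ (V → κ) := Equiv.arrowCongr e.symm (Equiv.refl κ)
  rw [← E.summable_iff]
  have h3 : ((fun g : V → κ => ∏ v, c (g v)) ∘ E)
      = fun f : Fin (Fintype.card V) → κ => ∏ j, c (f j) := by
    funext f
    simpa [E, Equiv.arrowCongr] using Equiv.prod_comp e (fun j => c (f j))
  rw [h3]
  exact summable_pi_fin c hnn hc _

namespace DRX
open scoped Classical

variable {m n : ℕ}

def mkc (x : (Fin n → Fin m) → ℕ) (u : (Fin n → Fin m) → Bool) : (Fin n → Fin m) → ℕ × Bool :=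
  fun v => (x v, u v)

def lf (b : Bool) (q : ℝ) : ℝ := if b then q else 1 - q
def sg (b : Bool) : ℝ := if b then 1 else -1

def chi (m n : ℕ) : ((Fin n → Fin m) → ℕ) → ℝ := fun g => if rootVal m n g = 0 then (1:ℝ) else 0

def wx (ν : ℕ → ℝ) (x : (Fin n → Fin m) → ℕ) : ℝ := ∏ v, ν (x v)

def G (m n : ℕ) (ν : ℕ → ℝ) (u : (Fin n → Fin m) → Bool) : ℝ :=
  ∑' x : (Fin n → Fin m) → ℕ, wx ν x * chi m n (cfgLeaf (mkc x u))

section withnu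
variable (ν : ℕ → ℝ) (hnn : ∀ j, 0 ≤ ν j) (hν : Summable ν)

include hnn in
lemma wx_nonneg (x : (Fin n → Fin m) → ℕ) : 0 ≤ wx ν x :=
  Finset.prod_nonneg fun v _ => hnn _

include hnn hν in
lemma summable_wx : Summable (wx (m := m) (n := n) ν) :=
  summable_pi ν hnn hν

include hnn hν in
lemma summable_dom (h : ((Fin n → Fin m) → ℕ) → ℝ) (C : ℝ) (hb : ∀ x, |h x| ≤ C) :
    Summable (fun x : (Fin n → Fin m) → ℕ => wx ν x * h x) := by
  apply Summable.of_abs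
  refine Summable.of_nonneg_of_le (fun x => abs_nonneg _) (fun x => ?_)
    ((summable_wx ν hnn hν).mul_right C)
  rw [abs_mul, abs_of_nonneg (wx_nonneg ν hnn x)]
  exact mul_le_mul_of_nonneg_left (hb x) (wx_nonneg ν hnn x)

lemma cfgWeight_mkc (q : ℝ) (x : (Fin n → Fin m) → ℕ) (u : (Fin n → Fin m) → Bool) :
    cfgWeight m n ν q (mkc x u) = wx ν x * ∏ v, lf (u v) q := by
  rw [cfgWeight, wx, ← Finset.prod_mul_distrib]
  rfl

include hnn hν in
lemma summable_master (q : ℝ) (r : ((Fin n → Fin m) → ℕ × Bool) → ℝ) (R : ℝ)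
    (hr : ∀ ω, |r ω| ≤ R) :
    Summable (fun ω : (Fin n → Fin m) → ℕ × Bool => cfgWeight m n ν q ω * r ω) := by
  have hcs : Summable (fun z : ℕ × Bool => ν z.1 * |lf z.2 q|) := by
    have hb : Summable (fun b : Bool => |lf b q|) := .of_finite
    have h2 := hν.mul_of_nonneg hb (Pi.le_def.mpr hnn) (Pi.le_def.mpr fun b => abs_nonneg _)
    exact h2
  have hS : Summable (fun ω : (Fin n → Fin m) → ℕ × Bool =>
      ∏ v, (ν (ω v).1 * |lf (ω v).2 q|)) := by
    have := summable_pi (V := Fin n → Fin m) (fun z : ℕ × Bool => ν z.1 * |lf z.2 q|)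
      (fun z => mul_nonneg (hnn _) (abs_nonneg _)) hcs
    exact this
  apply Summable.of_abs
  refine Summable.of_nonneg_of_le (fun ω => abs_nonneg _) (fun ω => ?_) (hS.mul_right R)
  rw [abs_mul]
  have h1 : |cfgWeight m n ν q ω| = ∏ v, (ν (ω v).1 * |lf (ω v).2 q|) := by
    rw [cfgWeight, Finset.abs_prod]
    exact Finset.prod_congr rfl fun v _ => by
      rw [abs_mul, abs_of_nonneg (hnn _)]; rfl
  rw [h1]
  exact mul_le_mul_of_nonneg_left (hr ω)
    (Finset.prod_nonneg fun v _ => mul_nonneg (hnn _) (abs_nonneg _))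

end withnu

lemma tsum_slice (Φ : ((Fin n → Fin m) → ℕ × Bool) → ℝ) (h : Summable Φ) :
    ∑' ω, Φ ω = ∑ u : (Fin n → Fin m) → Bool, ∑' x : (Fin n → Fin m) → ℕ, Φ (mkc x u) := by
  let E : ((Fin n → Fin m) → ℕ × Bool) ≃ ((Fin n → Fin m) → ℕ) × ((Fin n → Fin m) → Bool) :=
    Equiv.arrowProdEquivProdArrow (Fin n → Fin m) (fun _ => ℕ) (fun _ => Bool)
  let E2 : (((Fin n → Fin m) → Bool) × ((Fin n → Fin m) → ℕ)) ≃ ((Fin n → Fin m) → ℕ × Bool) :=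
    (Equiv.prodComm _ _).trans E.symm
  have key : ∀ p : ((Fin n → Fin m) → Bool) × ((Fin n → Fin m) → ℕ),
      E2 p = mkc p.2 p.1 := fun p => rfl
  have h1 : ∑' ω, Φ ω = ∑' p : ((Fin n → Fin m) → Bool) × ((Fin n → Fin m) → ℕ), Φ (E2 p) :=
    (E2.tsum_eq Φ).symm
  have hsum2 : Summable (fun p : ((Fin n → Fin m) → Bool) × ((Fin n → Fin m) → ℕ) =>
      Φ (E2 p)) := (E2.summable_iff).2 h
  have hslice : ∀ u : (Fin n → Fin m) → Bool,
      Summable (fun x : (Fin n → Fin m) → ℕ => Φ (E2 (u, x))) := by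
    intro u
    have hinj : Function.Injective (fun x : (Fin n → Fin m) → ℕ =>
        ((u, x) : ((Fin n → Fin m) → Bool) × ((Fin n → Fin m) → ℕ))) := by
      intro a b hab; simpa using congrArg Prod.snd hab
    exact (hsum2.comp_injective hinj)
  rw [h1, Summable.tsum_prod' hsum2 hslice, tsum_fintype]
  rfl

lemma summable_slice (Φ : ((Fin n → Fin m) → ℕ × Bool) → ℝ) (h : Summable Φ)
    (u : (Fin n → Fin m) → Bool) :
    Summable (fun x : (Fin n → Fin m) → ℕ => Φ (mkc x u)) := by
  have hinj : Function.Injective (fun x : (Fin n → Fin m) → ℕ => mkc x u) := by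
    intro a b hab
    funext v
    have := congrFun hab v
    simpa [mkc, Prod.ext_iff] using this
  exact h.comp_injective hinj


section deriv
variable (ν : ℕ → ℝ)

def Dk (m n : ℕ) (ν : ℕ → ℝ) (k : ℕ) (q : ℝ) : ℝ :=
  ∑ A ∈ powersetCard k (univ : Finset (Fin n → Fin m)),
    ∑ u : (Fin n → Fin m) → Bool,
      (G m n ν u * ∏ v ∈ A, sg (u v)) * ∏ v ∈ univ \ A, lf (u v) q

lemma lf_hasDeriv (b : Bool) (q : ℝ) : HasDerivAt (fun q => lf b q) (sg b) q := by
  cases b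
  · simpa [lf, sg] using (hasDerivAt_id q).const_sub 1
  · simpa [lf, sg] using hasDerivAt_id' q

lemma prodL_hasDeriv (T : Finset (Fin n → Fin m)) (u : (Fin n → Fin m) → Bool) (q : ℝ) :
    HasDerivAt (fun q => ∏ v ∈ T, lf (u v) q)
      (∑ w ∈ T, (∏ v ∈ T.erase w, lf (u v) q) * sg (u w)) q := by
  have h := HasDerivAt.fun_finsetProd (u := T) (f := fun v q => lf (u v) q)
    (f' := fun v => sg (u v)) (x := q) (fun i _ => lf_hasDeriv (u i) q)
  simpa [smul_eq_mul] using h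

lemma comb {V : Type*} [Fintype V] [DecidableEq V] (k : ℕ) (h : Finset V → ℝ) :
    ∑ A ∈ powersetCard k (univ : Finset V), ∑ w ∈ univ \ A, h (insert w A)
      = ((k : ℝ) + 1) * ∑ B ∈ powersetCard (k + 1) (univ : Finset V), h B := by
  have hR : ((k : ℝ) + 1) * ∑ B ∈ powersetCard (k + 1) (univ : Finset V), h B
      = ∑ B ∈ powersetCard (k + 1) (univ : Finset V), ∑ _w ∈ B, h B := by
    rw [Finset.mul_sum]
    refine Finset.sum_congr rfl fun B hB => ?_
    rw [Finset.sum_const, (Finset.mem_powersetCard.mp hB).2, nsmul_eq_mul]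
    push_cast; ring
  rw [hR, Finset.sum_sigma', Finset.sum_sigma']
  refine Finset.sum_bij' (fun a _ => ⟨insert a.2 a.1, a.2⟩) (fun a _ => ⟨a.1.erase a.2, a.2⟩)
    ?_ ?_ ?_ ?_ ?_
  · rintro ⟨A, w⟩ ha
    rw [Finset.mem_sigma] at ha ⊢
    obtain ⟨hA, hw⟩ := ha
    rw [Finset.mem_powersetCard] at hA
    refine ⟨Finset.mem_powersetCard.mpr ⟨Finset.subset_univ _, ?_⟩, Finset.mem_insert_self _ _⟩
    rw [Finset.card_insert_of_notMem (by simpa using (Finset.mem_sdiff.mp hw).2), hA.2]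
  · rintro ⟨B, w⟩ hb
    rw [Finset.mem_sigma] at hb ⊢
    obtain ⟨hB, hw⟩ := hb
    rw [Finset.mem_powersetCard] at hB
    refine ⟨Finset.mem_powersetCard.mpr ⟨Finset.subset_univ _, ?_⟩, ?_⟩
    · rw [Finset.card_erase_of_mem hw, hB.2]; rfl
    · simp
  · rintro ⟨A, w⟩ ha
    rw [Finset.mem_sigma] at ha
    have : w ∉ A := by simpa using (Finset.mem_sdiff.mp ha.2).2
    simp [Finset.erase_insert this]
  · rintro ⟨B, w⟩ hb
    rw [Finset.mem_sigma] at hb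
    simp [Finset.insert_erase hb.2]
  · rintro ⟨A, w⟩ _
    rfl

lemma Dk_hasDeriv (k : ℕ) (q : ℝ) :
    HasDerivAt (Dk m n ν k) (((k : ℝ) + 1) * Dk m n ν (k + 1) q) q := by
  classical
  set H : Finset (Fin n → Fin m) → ℝ := fun B =>
    ∑ u : (Fin n → Fin m) → Bool,
      (G m n ν u * ∏ v ∈ B, sg (u v)) * ∏ v ∈ univ \ B, lf (u v) q with hH
  have h1 : HasDerivAt (Dk m n ν k)
      (∑ A ∈ powersetCard k (univ : Finset (Fin n → Fin m)),
        ∑ u : (Fin n → Fin m) → Bool,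
          (G m n ν u * ∏ v ∈ A, sg (u v)) *
            (∑ w ∈ univ \ A, (∏ v ∈ (univ \ A).erase w, lf (u v) q) * sg (u w))) q := by
    apply HasDerivAt.fun_sum
    intro A _
    apply HasDerivAt.fun_sum
    intro u _
    exact (prodL_hasDeriv _ u q).const_mul _
  have hval : (∑ A ∈ powersetCard k (univ : Finset (Fin n → Fin m)),
        ∑ u : (Fin n → Fin m) → Bool,
          (G m n ν u * ∏ v ∈ A, sg (u v)) *
            (∑ w ∈ univ \ A, (∏ v ∈ (univ \ A).erase w, lf (u v) q) * sg (u w)))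
      = ((k : ℝ) + 1) * Dk m n ν (k + 1) q := by
    have hstep : ∀ A ∈ powersetCard k (univ : Finset (Fin n → Fin m)),
        (∑ u : (Fin n → Fin m) → Bool,
          (G m n ν u * ∏ v ∈ A, sg (u v)) *
            (∑ w ∈ univ \ A, (∏ v ∈ (univ \ A).erase w, lf (u v) q) * sg (u w)))
        = ∑ w ∈ univ \ A, H (insert w A) := by
      intro A _
      have h2 : ∀ u : (Fin n → Fin m) → Bool,
          (G m n ν u * ∏ v ∈ A, sg (u v)) *
            (∑ w ∈ univ \ A, (∏ v ∈ (univ \ A).erase w, lf (u v) q) * sg (u w))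
          = ∑ w ∈ univ \ A,
              (G m n ν u * ∏ v ∈ insert w A, sg (u v)) *
                ∏ v ∈ univ \ insert w A, lf (u v) q := by
        intro u
        rw [Finset.mul_sum]
        refine Finset.sum_congr rfl fun w hw => ?_
        have hwA : w ∉ A := by simpa using (Finset.mem_sdiff.mp hw).2
        have he : (univ \ A).erase w = univ \ insert w A := by
          ext v
          simp only [Finset.mem_erase, Finset.mem_sdiff, Finset.mem_univ, true_and,
            Finset.mem_insert, not_or]
        rw [Finset.prod_insert hwA, he]
        ring
      rw [Finset.sum_congr rfl fun u _ => h2 u, Finset.sum_comm]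
    rw [Finset.sum_congr rfl hstep, comb k H]
    rfl
  rw [← hval]
  exact h1
end deriv

lemma iter_Dk (ν : ℕ → ℝ) (k : ℕ) :
    iteratedDeriv k (Dk m n ν 0) = fun q => (k.factorial : ℝ) * Dk m n ν k q := by
  induction k with
  | zero => funext q; simp [iteratedDeriv_zero]
  | succ k ih =>
      funext q
      rw [iteratedDeriv_succ, ih]
      have hd : deriv (fun q => (k.factorial : ℝ) * Dk m n ν k q) q
          = (k.factorial : ℝ) * (((k : ℝ) + 1) * Dk m n ν (k + 1) q) :=
        ((Dk_hasDeriv ν k q).const_mul (k.factorial : ℝ)).deriv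
      rw [hd, Nat.factorial_succ]
      push_cast
      ring

lemma Dk_zero (ν : ℕ → ℝ) (q : ℝ) :
    Dk m n ν 0 q = ∑ u : (Fin n → Fin m) → Bool, G m n ν u * ∏ v, lf (u v) q := by
  rw [Dk, Finset.powersetCard_zero, Finset.sum_singleton]
  refine Finset.sum_congr rfl fun u _ => ?_
  rw [Finset.prod_empty, Finset.sdiff_empty, mul_one]

lemma chi_abs_le (g : (Fin n → Fin m) → ℕ) : |chi m n g| ≤ 1 := by
  rw [chi]; split <;> simp

lemma F_eq (ν : ℕ → ℝ) (hnn : ∀ j, 0 ≤ ν j) (hν : Summable ν) (q : ℝ) :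
    ∑' ω : (Fin n → Fin m) → ℕ × Bool, cfgWeight m n ν q ω * chi m n (cfgLeaf ω)
      = Dk m n ν 0 q := by
  rw [Dk_zero]
  have hmaster := summable_master ν hnn hν q (fun ω => chi m n (cfgLeaf ω)) 1
    (fun ω => chi_abs_le _)
  rw [tsum_slice _ hmaster]
  refine Finset.sum_congr rfl fun u _ => ?_
  have h1 : ∀ x : (Fin n → Fin m) → ℕ,
      cfgWeight m n ν q (mkc x u) * chi m n (cfgLeaf (mkc x u))
      = (∏ v, lf (u v) q) * (wx ν x * chi m n (cfgLeaf (mkc x u))) := by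
    intro x; rw [cfgWeight_mkc]; ring
  rw [tsum_congr h1, tsum_mul_left, G]
  ring

-- reindexing of Boolean configurations
lemma sum_reindex (A : Finset (Fin n → Fin m)) (f : ((Fin n → Fin m) → Bool) → ℝ) :
    ∑ u : (Fin n → Fin m) → Bool, f u
      = ∑ P ∈ (univ.filter (fun u : (Fin n → Fin m) → Bool => ∀ v ∈ A, u v = false)) ×ˢ
          A.powerset,
          f (fun v => if v ∈ A then decide (v ∈ P.2) else P.1 v) := by
  symm
  refine Finset.sum_nbij'
    (i := fun P => (fun v => if v ∈ A then decide (v ∈ P.2) else P.1 v))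
    (j := fun u => (fun v => if v ∈ A then false else u v, A.filter (fun v => u v = true)))
    ?_ ?_ ?_ ?_ ?_
  · intro P _; exact Finset.mem_univ _
  · intro u _
    rw [Finset.mem_product]
    constructor
    · rw [Finset.mem_filter]
      exact ⟨Finset.mem_univ _, fun v hv => by simp [hv]⟩
    · exact Finset.mem_powerset.mpr (Finset.filter_subset _ _)
  · rintro ⟨u₀, B⟩ hP
    rw [Finset.mem_product, Finset.mem_filter, Finset.mem_powerset] at hP
    obtain ⟨⟨-, h0⟩, hBA⟩ := hP
    refine Prod.ext ?_ ?_
    · funext v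
      by_cases hvA : v ∈ A
      · simp only [hvA, if_pos]
        exact (h0 v hvA).symm
      · simp [hvA]
    · ext v
      simp only [Finset.mem_filter]
      constructor
      · rintro ⟨hvA, hv⟩
        simp only [hvA, if_pos, decide_eq_true_eq] at hv
        exact hv
      · intro hvB
        have hvA : v ∈ A := hBA hvB
        exact ⟨hvA, by simp [hvA, hvB]⟩
  · intro u _
    funext v
    by_cases hvA : v ∈ A
    · simp only [hvA, if_pos]
      by_cases hv : u v = true
      · rw [decide_eq_true (by simp [Finset.mem_filter, hvA, hv])]
        exact hv.symm
      · rw [decide_eq_false (by simp [Finset.mem_filter, hv])]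
        simpa using (Bool.not_eq_true (u v)).mp hv |>.symm
    · simp [hvA]
  · intro P _; rfl

lemma leaf_phi (A B : Finset (Fin n → Fin m)) (hBA : B ⊆ A) (x : (Fin n → Fin m) → ℕ)
    (u₀ : (Fin n → Fin m) → Bool) (h0 : ∀ v ∈ A, u₀ v = false) :
    cfgLeaf (mkc x (fun v => if v ∈ A then decide (v ∈ B) else u₀ v))
      = cfgTheta (mkc x u₀) B := by
  funext v
  by_cases hvB : v ∈ B
  · have hvA : v ∈ A := hBA hvB
    simp [cfgLeaf, cfgTheta, mkc, hvB, hvA]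
  · by_cases hvA : v ∈ A
    · simp [cfgLeaf, cfgTheta, mkc, hvB, hvA, h0 v hvA]
    · by_cases hu : u₀ v = true <;> simp [cfgLeaf, cfgTheta, mkc, hvB, hvA, hu]

lemma phi_S (A B : Finset (Fin n → Fin m)) (hBA : B ⊆ A) (u₀ : (Fin n → Fin m) → Bool) :
    (∏ v ∈ A, sg ((fun v => if v ∈ A then decide (v ∈ B) else u₀ v) v))
      = (-1 : ℝ) ^ (A.card - B.card) := by
  have h1 : ∀ v ∈ A, sg ((fun v => if v ∈ A then decide (v ∈ B) else u₀ v) v)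
      = (if v ∈ B then (1:ℝ) else -1) := by
    intro v hv
    simp only [hv, if_pos, sg]
    by_cases hvB : v ∈ B <;> simp [hvB]
  rw [Finset.prod_congr rfl h1, ← Finset.prod_sdiff hBA]
  have h2 : ∀ v ∈ A \ B, (if v ∈ B then (1:ℝ) else -1) = -1 := by
    intro v hv; rw [if_neg (Finset.mem_sdiff.mp hv).2]
  have h3 : ∀ v ∈ B, (if v ∈ B then (1:ℝ) else -1) = 1 := by
    intro v hv; rw [if_pos hv]
  rw [Finset.prod_congr rfl h2, Finset.prod_congr rfl h3, Finset.prod_const,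
    Finset.prod_const, Finset.card_sdiff_of_subset hBA, one_pow, mul_one]

lemma nabla_le (ω : (Fin n → Fin m) → ℕ × Bool) (A : Finset (Fin n → Fin m)) :
    |cfgNabla ω A (chi m n)| ≤ 2 ^ A.card := by
  calc |cfgNabla ω A (chi m n)|
      ≤ ∑ B ∈ A.powerset, |(-1 : ℝ) ^ (A.card - B.card) * chi m n (cfgTheta ω B)| :=
        Finset.abs_sum_le_sum_abs _ _
    _ ≤ ∑ B ∈ A.powerset, 1 := by
        refine Finset.sum_le_sum fun B _ => ?_
        rw [abs_mul, abs_pow, abs_neg, abs_one, one_pow, one_mul]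
        exact chi_abs_le _
    _ = 2 ^ A.card := by
        rw [Finset.sum_const, Finset.card_powerset, nsmul_eq_mul, mul_one]
        push_cast; ring

lemma nabla_bound (ω : (Fin n → Fin m) → ℕ × Bool) (A : Finset (Fin n → Fin m)) :
    |cfgNabla ω A (chi m n)|
      ≤ 2 ^ A.card * (if cfgNabla ω A (chi m n) ≠ 0 then (1:ℝ) else 0) := by
  by_cases h : cfgNabla ω A (chi m n) = 0
  · simp [h]
  · rw [if_pos h, mul_one]
    exact nabla_le ω A

lemma inner_sum_eq (ν : ℕ → ℝ) (hnn : ∀ j, 0 ≤ ν j) (hν : Summable ν) (p : ℝ)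
    (A : Finset (Fin n → Fin m)) (u₀ : (Fin n → Fin m) → Bool)
    (h0 : ∀ v ∈ A, u₀ v = false) :
    (∑ B ∈ A.powerset,
      (G m n ν (fun v => if v ∈ A then decide (v ∈ B) else u₀ v) *
          ∏ v ∈ A, sg ((fun v => if v ∈ A then decide (v ∈ B) else u₀ v) v)) *
        ∏ v ∈ univ \ A, lf ((fun v => if v ∈ A then decide (v ∈ B) else u₀ v) v) p)
    = (∑' x : (Fin n → Fin m) → ℕ, wx ν x * cfgNabla (mkc x u₀) A (chi m n)) *
        ∏ v ∈ univ \ A, lf (u₀ v) p := by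
  have hterm : ∀ B ∈ A.powerset,
      (G m n ν (fun v => if v ∈ A then decide (v ∈ B) else u₀ v) *
          ∏ v ∈ A, sg ((fun v => if v ∈ A then decide (v ∈ B) else u₀ v) v)) *
        ∏ v ∈ univ \ A, lf ((fun v => if v ∈ A then decide (v ∈ B) else u₀ v) v) p
      = (∑' x : (Fin n → Fin m) → ℕ,
          wx ν x * ((-1 : ℝ) ^ (A.card - B.card) * chi m n (cfgTheta (mkc x u₀) B))) *
          ∏ v ∈ univ \ A, lf (u₀ v) p := by
    intro B hB
    have hBA : B ⊆ A := Finset.mem_powerset.mp hB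
    have hL : (∏ v ∈ univ \ A, lf ((fun v => if v ∈ A then decide (v ∈ B) else u₀ v) v) p)
        = ∏ v ∈ univ \ A, lf (u₀ v) p := by
      refine Finset.prod_congr rfl fun v hv => ?_
      simp [(Finset.mem_sdiff.mp hv).2]
    have hG : G m n ν (fun v => if v ∈ A then decide (v ∈ B) else u₀ v)
        = ∑' x : (Fin n → Fin m) → ℕ, wx ν x * chi m n (cfgTheta (mkc x u₀) B) := by
      rw [G]
      exact tsum_congr fun x => by rw [leaf_phi A B hBA x u₀ h0]
    rw [hG, phi_S A B hBA u₀, hL, ← tsum_mul_right]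
    congr 1
    exact tsum_congr fun x => by ring
  rw [Finset.sum_congr rfl hterm, ← Finset.sum_mul]
  congr 1
  have hsumm : ∀ B ∈ A.powerset,
      Summable (fun x : (Fin n → Fin m) → ℕ =>
        wx ν x * ((-1 : ℝ) ^ (A.card - B.card) * chi m n (cfgTheta (mkc x u₀) B))) := by
    intro B _
    refine summable_dom ν hnn hν _ 1 fun x => ?_
    rw [abs_mul, abs_pow, abs_neg, abs_one, one_pow, one_mul]
    exact chi_abs_le _
  rw [← Summable.tsum_finsetSum hsumm]
  refine tsum_congr fun x => ?_
  rw [← Finset.mul_sum]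
  rfl

lemma tsum_nabla_bound (ν : ℕ → ℝ) (hnn : ∀ j, 0 ≤ ν j) (hν : Summable ν)
    (A : Finset (Fin n → Fin m)) (u₀ : (Fin n → Fin m) → Bool) :
    |∑' x : (Fin n → Fin m) → ℕ, wx ν x * cfgNabla (mkc x u₀) A (chi m n)|
      ≤ 2 ^ A.card * ∑' x : (Fin n → Fin m) → ℕ,
          wx ν x * (if cfgNabla (mkc x u₀) A (chi m n) ≠ 0 then (1:ℝ) else 0) := by
  have hs1 : Summable (fun x : (Fin n → Fin m) → ℕ =>
      wx ν x * cfgNabla (mkc x u₀) A (chi m n)) :=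
    summable_dom ν hnn hν _ (2 ^ A.card) (fun x => nabla_le _ _)
  have hs2 : Summable (fun x : (Fin n → Fin m) → ℕ =>
      wx ν x * (2 ^ A.card *
        (if cfgNabla (mkc x u₀) A (chi m n) ≠ 0 then (1:ℝ) else 0))) := by
    refine summable_dom ν hnn hν _ (2 ^ A.card) fun x => ?_
    rw [abs_mul]
    have h2 : |(2:ℝ) ^ A.card| = 2 ^ A.card := abs_of_nonneg (by positivity)
    rw [h2]
    nth_rewrite 2 [show (2:ℝ) ^ A.card = 2 ^ A.card * 1 by ring]
    refine mul_le_mul_of_nonneg_left ?_ (by positivity)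
    split <;> simp
  have hsJ : Summable (fun x : (Fin n → Fin m) → ℕ =>
      wx ν x * (if cfgNabla (mkc x u₀) A (chi m n) ≠ 0 then (1:ℝ) else 0)) :=
    summable_dom ν hnn hν _ 1 (fun x => by split <;> simp)
  have step1 : |∑' x : (Fin n → Fin m) → ℕ, wx ν x * cfgNabla (mkc x u₀) A (chi m n)|
      ≤ ∑' x : (Fin n → Fin m) → ℕ, |wx ν x * cfgNabla (mkc x u₀) A (chi m n)| := by
    have hn : Summable (fun x : (Fin n → Fin m) → ℕ =>
        ‖wx ν x * cfgNabla (mkc x u₀) A (chi m n)‖) := by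
      simpa only [Real.norm_eq_abs] using hs1.abs
    simpa only [Real.norm_eq_abs] using norm_tsum_le_tsum_norm hn
  have step2 : ∑' x : (Fin n → Fin m) → ℕ, |wx ν x * cfgNabla (mkc x u₀) A (chi m n)|
      ≤ ∑' x : (Fin n → Fin m) → ℕ,
          wx ν x * (2 ^ A.card *
            (if cfgNabla (mkc x u₀) A (chi m n) ≠ 0 then (1:ℝ) else 0)) := by
    refine Summable.tsum_le_tsum (fun x => ?_) hs1.abs hs2
    rw [abs_mul, abs_of_nonneg (wx_nonneg ν hnn x)]
    exact mul_le_mul_of_nonneg_left (nabla_bound _ _) (wx_nonneg ν hnn x)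
  have step3 : ∑' x : (Fin n → Fin m) → ℕ,
        wx ν x * (2 ^ A.card *
          (if cfgNabla (mkc x u₀) A (chi m n) ≠ 0 then (1:ℝ) else 0))
      = 2 ^ A.card * ∑' x : (Fin n → Fin m) → ℕ,
          wx ν x * (if cfgNabla (mkc x u₀) A (chi m n) ≠ 0 then (1:ℝ) else 0) := by
    rw [← tsum_mul_left]
    exact tsum_congr fun x => by ring
  calc |∑' x : (Fin n → Fin m) → ℕ, wx ν x * cfgNabla (mkc x u₀) A (chi m n)|
      ≤ ∑' x : (Fin n → Fin m) → ℕ, |wx ν x * cfgNabla (mkc x u₀) A (chi m n)| := step1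
    _ ≤ _ := step2
    _ = _ := step3

lemma cfgWeight_nonneg (ν : ℕ → ℝ) (hnn : ∀ j, 0 ≤ ν j) (p : ℝ)
    (hp : p ∈ Set.Ioo (0:ℝ) 1) (ω : (Fin n → Fin m) → ℕ × Bool) :
    0 ≤ cfgWeight m n ν p ω := by
  refine Finset.prod_nonneg fun v _ => mul_nonneg (hnn _) ?_
  split
  · exact le_of_lt hp.1
  · linarith [hp.2]

lemma lfprod_nonneg (p : ℝ) (hp : p ∈ Set.Ioo (0:ℝ) 1) (T : Finset (Fin n → Fin m))
    (u : (Fin n → Fin m) → Bool) : 0 ≤ ∏ v ∈ T, lf (u v) p := by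
  refine Finset.prod_nonneg fun v _ => ?_
  rw [lf]; split
  · exact le_of_lt hp.1
  · linarith [hp.2]

lemma rhs_slice (ν : ℕ → ℝ) (hnn : ∀ j, 0 ≤ ν j) (hν : Summable ν) (p : ℝ)
    (hp : p ∈ Set.Ioo (0:ℝ) 1) (k : ℕ) (A : Finset (Fin n → Fin m))
    (hA : A ∈ powersetCard k (univ : Finset (Fin n → Fin m))) :
    (1 - p) ^ k *
      ∑ u₀ ∈ univ.filter (fun u : (Fin n → Fin m) → Bool => ∀ v ∈ A, u v = false),
        (∏ v ∈ univ \ A, lf (u₀ v) p) *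
          ∑' x : (Fin n → Fin m) → ℕ,
            wx ν x * (if cfgNabla (mkc x u₀) A (chi m n) ≠ 0 then (1:ℝ) else 0)
      ≤ ∑' ω : (Fin n → Fin m) → ℕ × Bool,
          cfgWeight m n ν p ω *
            (if cfgNabla ω A (chi m n) ≠ 0 ∧ ∀ v ∈ A, cfgLeaf ω v = 0 then (1:ℝ) else 0) := by
  have hcard : A.card = k := (Finset.mem_powersetCard.mp hA).2
  have hmaster := summable_master ν hnn hν p
    (fun ω => (if cfgNabla ω A (chi m n) ≠ 0 ∧ ∀ v ∈ A, cfgLeaf ω v = 0 then (1:ℝ) else 0)) 1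
    (fun ω => by beta_reduce; split <;> simp)
  rw [tsum_slice _ hmaster]
  beta_reduce
  have hsub : (univ.filter (fun u : (Fin n → Fin m) → Bool => ∀ v ∈ A, u v = false))
      ⊆ univ := Finset.filter_subset _ _
  have hstep : ∀ u₀ ∈ univ.filter
        (fun u : (Fin n → Fin m) → Bool => ∀ v ∈ A, u v = false),
      (1 - p) ^ k * ((∏ v ∈ univ \ A, lf (u₀ v) p) *
          ∑' x : (Fin n → Fin m) → ℕ,
            wx ν x * (if cfgNabla (mkc x u₀) A (chi m n) ≠ 0 then (1:ℝ) else 0))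
      = ∑' x : (Fin n → Fin m) → ℕ,
          cfgWeight m n ν p (mkc x u₀) *
            (if cfgNabla (mkc x u₀) A (chi m n) ≠ 0 ∧
                ∀ v ∈ A, cfgLeaf (mkc x u₀) v = 0 then (1:ℝ) else 0) := by
    intro u₀ hu₀
    have h0 : ∀ v ∈ A, u₀ v = false := (Finset.mem_filter.mp hu₀).2
    have hprod : (∏ v, lf (u₀ v) p)
        = (1 - p) ^ k * ∏ v ∈ univ \ A, lf (u₀ v) p := by
      rw [← Finset.prod_sdiff (Finset.subset_univ A)]
      have : ∀ v ∈ A, lf (u₀ v) p = 1 - p := by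
        intro v hv; rw [lf, h0 v hv]; simp
      rw [Finset.prod_congr rfl this, Finset.prod_const, hcard, mul_comm]
    have hterm : ∀ x : (Fin n → Fin m) → ℕ,
        cfgWeight m n ν p (mkc x u₀) *
          (if cfgNabla (mkc x u₀) A (chi m n) ≠ 0 ∧
              ∀ v ∈ A, cfgLeaf (mkc x u₀) v = 0 then (1:ℝ) else 0)
        = ((1 - p) ^ k * ∏ v ∈ univ \ A, lf (u₀ v) p) *
            (wx ν x * (if cfgNabla (mkc x u₀) A (chi m n) ≠ 0 then (1:ℝ) else 0)) := by
      intro x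
      have hiff : (cfgNabla (mkc x u₀) A (chi m n) ≠ 0 ∧
          ∀ v ∈ A, cfgLeaf (mkc x u₀) v = 0) ↔
          cfgNabla (mkc x u₀) A (chi m n) ≠ 0 := by
        refine and_iff_left fun v hv => ?_
        simp [cfgLeaf, mkc, h0 v hv]
      rw [if_congr hiff rfl rfl, cfgWeight_mkc, hprod]
      ring
    rw [tsum_congr hterm, tsum_mul_left]
    ring
  rw [Finset.mul_sum, Finset.sum_congr rfl hstep]
  refine Finset.sum_le_sum_of_subset_of_nonneg hsub fun u _ _ => ?_
  refine tsum_nonneg fun x => ?_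
  refine mul_nonneg (cfgWeight_nonneg ν hnn p hp _) ?_
  split <;> norm_num

lemma inner_bound (ν : ℕ → ℝ) (hnn : ∀ j, 0 ≤ ν j) (hν : Summable ν) (p : ℝ)
    (hp : p ∈ Set.Ioo (0:ℝ) 1) (k : ℕ) (A : Finset (Fin n → Fin m))
    (hA : A ∈ powersetCard k (univ : Finset (Fin n → Fin m))) :
    |∑ u : (Fin n → Fin m) → Bool,
        (G m n ν u * ∏ v ∈ A, sg (u v)) * ∏ v ∈ univ \ A, lf (u v) p|
      ≤ (2 ^ k / (1 - p) ^ k) *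
          ∑' ω : (Fin n → Fin m) → ℕ × Bool,
            cfgWeight m n ν p ω *
              (if cfgNabla ω A (chi m n) ≠ 0 ∧ ∀ v ∈ A, cfgLeaf ω v = 0
                then (1:ℝ) else 0) := by
  have hcard : A.card = k := (Finset.mem_powersetCard.mp hA).2
  have h1p : (0:ℝ) < 1 - p := by linarith [hp.2]
  have hrew : (∑ u : (Fin n → Fin m) → Bool,
      (G m n ν u * ∏ v ∈ A, sg (u v)) * ∏ v ∈ univ \ A, lf (u v) p)
      = ∑ u₀ ∈ univ.filter (fun u : (Fin n → Fin m) → Bool => ∀ v ∈ A, u v = false),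
          (∑' x : (Fin n → Fin m) → ℕ, wx ν x * cfgNabla (mkc x u₀) A (chi m n)) *
            ∏ v ∈ univ \ A, lf (u₀ v) p := by
    rw [sum_reindex A
        (fun u => (G m n ν u * ∏ v ∈ A, sg (u v)) * ∏ v ∈ univ \ A, lf (u v) p),
      Finset.sum_product]
    exact Finset.sum_congr rfl fun u₀ hu₀ =>
      inner_sum_eq ν hnn hν p A u₀ (Finset.mem_filter.mp hu₀).2
  rw [hrew]
  have hM0 : 0 ≤ ∑ u₀ ∈ univ.filter
        (fun u : (Fin n → Fin m) → Bool => ∀ v ∈ A, u v = false),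
      (∏ v ∈ univ \ A, lf (u₀ v) p) *
        ∑' x : (Fin n → Fin m) → ℕ,
          wx ν x * (if cfgNabla (mkc x u₀) A (chi m n) ≠ 0 then (1:ℝ) else 0) := by
    refine Finset.sum_nonneg fun u₀ _ => mul_nonneg (lfprod_nonneg p hp _ _) ?_
    refine tsum_nonneg fun x => mul_nonneg (wx_nonneg ν hnn x) ?_
    split <;> norm_num
  have habs : |∑ u₀ ∈ univ.filter
        (fun u : (Fin n → Fin m) → Bool => ∀ v ∈ A, u v = false),
      (∑' x : (Fin n → Fin m) → ℕ, wx ν x * cfgNabla (mkc x u₀) A (chi m n)) *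
        ∏ v ∈ univ \ A, lf (u₀ v) p|
      ≤ 2 ^ k * ∑ u₀ ∈ univ.filter
          (fun u : (Fin n → Fin m) → Bool => ∀ v ∈ A, u v = false),
        (∏ v ∈ univ \ A, lf (u₀ v) p) *
          ∑' x : (Fin n → Fin m) → ℕ,
            wx ν x * (if cfgNabla (mkc x u₀) A (chi m n) ≠ 0 then (1:ℝ) else 0) := by
    refine le_trans (Finset.abs_sum_le_sum_abs _ _) ?_
    rw [Finset.mul_sum]
    refine Finset.sum_le_sum fun u₀ hu₀ => ?_
    rw [abs_mul, abs_of_nonneg (lfprod_nonneg p hp _ _)]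
    have hnb := tsum_nabla_bound ν hnn hν A u₀
    rw [hcard] at hnb
    calc |∑' x : (Fin n → Fin m) → ℕ, wx ν x * cfgNabla (mkc x u₀) A (chi m n)| *
          ∏ v ∈ univ \ A, lf (u₀ v) p
        ≤ (2 ^ k * ∑' x : (Fin n → Fin m) → ℕ,
            wx ν x * (if cfgNabla (mkc x u₀) A (chi m n) ≠ 0 then (1:ℝ) else 0)) *
              ∏ v ∈ univ \ A, lf (u₀ v) p :=
          mul_le_mul_of_nonneg_right hnb (lfprod_nonneg p hp _ _)
      _ = 2 ^ k * ((∏ v ∈ univ \ A, lf (u₀ v) p) *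
            ∑' x : (Fin n → Fin m) → ℕ,
              wx ν x * (if cfgNabla (mkc x u₀) A (chi m n) ≠ 0 then (1:ℝ) else 0)) := by
          ring
  have hT := rhs_slice ν hnn hν p hp k A hA
  refine le_trans habs ?_
  have heq : (2:ℝ) ^ k * ∑ u₀ ∈ univ.filter
        (fun u : (Fin n → Fin m) → Bool => ∀ v ∈ A, u v = false),
      (∏ v ∈ univ \ A, lf (u₀ v) p) *
        ∑' x : (Fin n → Fin m) → ℕ,
          wx ν x * (if cfgNabla (mkc x u₀) A (chi m n) ≠ 0 then (1:ℝ) else 0)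
      = (2 ^ k / (1 - p) ^ k) * ((1 - p) ^ k * ∑ u₀ ∈ univ.filter
          (fun u : (Fin n → Fin m) → Bool => ∀ v ∈ A, u v = false),
        (∏ v ∈ univ \ A, lf (u₀ v) p) *
          ∑' x : (Fin n → Fin m) → ℕ,
            wx ν x * (if cfgNabla (mkc x u₀) A (chi m n) ≠ 0 then (1:ℝ) else 0)) := by
    field_simp
  rw [heq]
  exact mul_le_mul_of_nonneg_left hT (by positivity)

end DRX

open scoped Classical in
/-- Lemma 3.2. For every `k ≥ 1`, `n ≥ 0` and `p ∈ (0,1)`,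
`|dᵏ/dpᵏ P(X_n = 0)| ≤ (2^k k!/(1-p)^k) Σ_{|A|=k} P(∇^A 1_{X(e_n)=0} ≠ 0, X|_A = 0)`. -/
theorem deriv_PXn_zero_tree_bound
    (m : ℕ) (hm : 2 ≤ m) (n : ℕ) (ν : ℕ → ℝ)
    (hν0 : ν 0 = 0) (hνnn : ∀ j, 0 ≤ ν j) (hνsum : ∑' j, ν j = 1)
    (p : ℝ) (hp : p ∈ Set.Ioo (0 : ℝ) 1)
    (k : ℕ) (hk : 1 ≤ k) :
    |iteratedDeriv k
        (fun q => ∑' ω : (Fin n → Fin m) → ℕ × Bool,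
          cfgWeight m n ν q ω * (if rootVal m n (cfgLeaf ω) = 0 then (1 : ℝ) else 0)) p| ≤
      (2 ^ k * (k.factorial : ℝ) / (1 - p) ^ k) *
        ∑ A ∈ Finset.powersetCard k (Finset.univ : Finset (Fin n → Fin m)),
          ∑' ω : (Fin n → Fin m) → ℕ × Bool,
            cfgWeight m n ν p ω *
              (if cfgNabla ω A (fun g => if rootVal m n g = 0 then (1 : ℝ) else 0) ≠ 0 ∧
                  ∀ v ∈ A, cfgLeaf ω v = 0 then (1 : ℝ) else 0) := by
  have hν : Summable ν := by
    by_contra h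
    rw [tsum_eq_zero_of_not_summable h] at hνsum
    norm_num at hνsum
  have hFeq : (fun q => ∑' ω : (Fin n → Fin m) → ℕ × Bool,
      cfgWeight m n ν q ω * (if rootVal m n (cfgLeaf ω) = 0 then (1 : ℝ) else 0))
      = DRX.Dk m n ν 0 := by
    funext q
    exact DRX.F_eq ν hνnn hν q
  rw [hFeq, DRX.iter_Dk ν k]
  have hfac : (0:ℝ) ≤ (k.factorial : ℝ) := Nat.cast_nonneg _
  have hDk : |DRX.Dk m n ν k p| ≤ (2 ^ k / (1 - p) ^ k) *
      ∑ A ∈ Finset.powersetCard k (Finset.univ : Finset (Fin n → Fin m)),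
        ∑' ω : (Fin n → Fin m) → ℕ × Bool,
          cfgWeight m n ν p ω *
            (if cfgNabla ω A (DRX.chi m n) ≠ 0 ∧ ∀ v ∈ A, cfgLeaf ω v = 0
              then (1:ℝ) else 0) := by
    rw [DRX.Dk, Finset.mul_sum]
    refine le_trans (Finset.abs_sum_le_sum_abs _ _) ?_
    exact Finset.sum_le_sum fun A hA => DRX.inner_bound ν hνnn hν p hp k A hA
  have main : |(k.factorial : ℝ) * DRX.Dk m n ν k p|
      ≤ (2 ^ k * (k.factorial : ℝ) / (1 - p) ^ k) *
        ∑ A ∈ Finset.powersetCard k (Finset.univ : Finset (Fin n → Fin m)),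
          ∑' ω : (Fin n → Fin m) → ℕ × Bool,
            cfgWeight m n ν p ω *
              (if cfgNabla ω A (DRX.chi m n) ≠ 0 ∧ ∀ v ∈ A, cfgLeaf ω v = 0
                then (1:ℝ) else 0) := by
    rw [abs_mul, abs_of_nonneg hfac]
    calc (k.factorial : ℝ) * |DRX.Dk m n ν k p|
        ≤ (k.factorial : ℝ) * ((2 ^ k / (1 - p) ^ k) *
            ∑ A ∈ Finset.powersetCard k (Finset.univ : Finset (Fin n → Fin m)),
              ∑' ω : (Fin n → Fin m) → ℕ × Bool,
                cfgWeight m n ν p ω *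
                  (if cfgNabla ω A (DRX.chi m n) ≠ 0 ∧ ∀ v ∈ A, cfgLeaf ω v = 0
                    then (1:ℝ) else 0)) := mul_le_mul_of_nonneg_left hDk hfac
      _ = _ := by ring
  exact main
end
end

section
/- Let n ≥ 0 and i ≥ 0 be integers and let A be a nonempty set of leaves. Then for every leaf configuration on the event { ∇^A 1_{{X(e_n)=i}} ≠ 0 }, the following three statements hold: (1) X(w) ≤ (length of w) + i for every word w of length ≤ n; (2) Θ^A X(e_n) ≥ max(i, 1); (3) there exist nonnegative integers x_1, …, x_m with (x_1+⋯+x_m−1)^+ = i such that, for each j ∈ {1,…,m}, ∇^{A_j} 1_{{X(j)=x_j}} ≠ 0, where A_j := {v ∈ A : the last letter of v is j} and X(j) is the value at the length-one word j. -/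
noncomputable section

/-- Value at the vertex given by a word `w` of length `ℓ ≤ n` (a suffix of leaf words):
the root value of the subtree whose leaves are the leaves `v` ending with `w`. -/
def vertexVal (m n ℓ : ℕ) (hℓ : ℓ ≤ n) (f : (Fin n → Fin m) → ℕ)
    (w : Fin ℓ → Fin m) : ℕ :=
  rootVal m (n - ℓ) (fun u => f (fun i =>
    if h : (i : ℕ) < n - ℓ then u ⟨i, h⟩
    else w ⟨(i : ℕ) - (n - ℓ), by have := i.2; omega⟩))

/-- Value at the length-one word `j` (the generation-`(n-1)` vertex `j`). -/
def gen1Val (m n : ℕ) (f : (Fin n → Fin m) → ℕ) (j : Fin m) : ℕ :=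
  rootVal m (n - 1) (fun u => f (fun i =>
    if h : (i : ℕ) < n - 1 then u ⟨i, h⟩ else j))

/-- `Θ^B X`: leaf configuration equal to `X(v) = X_0^*(v)·u(v)` off `B` and to
`X_0^*(v)` on `B`. -/
def thetaCfg {m n : ℕ} (Xs : (Fin n → Fin m) → ℕ) (u : (Fin n → Fin m) → Bool)
    (B : Finset (Fin n → Fin m)) : (Fin n → Fin m) → ℕ :=
  fun v => if v ∈ B then Xs v else (if u v then Xs v else 0)

/-- `∇^A f(X) = Σ_{B ⊆ A} (-1)^{|A|-|B|} f(Θ^B X)`. -/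
def nablaCfg {m n : ℕ} (Xs : (Fin n → Fin m) → ℕ) (u : (Fin n → Fin m) → Bool)
    (A : Finset (Fin n → Fin m)) (f : ((Fin n → Fin m) → ℕ) → ℝ) : ℝ :=
  ∑ B ∈ A.powerset, (-1 : ℝ) ^ (A.card - B.card) * f (thetaCfg Xs u B)

-- AUX

lemma rootVal_mono (m : ℕ) : ∀ (n : ℕ) (f g : (Fin n → Fin m) → ℕ),
    (∀ v, f v ≤ g v) → rootVal m n f ≤ rootVal m n g
  | 0, f, g, h => h _
  | n+1, f, g, h => by
    simp only [rootVal]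
    exact Nat.sub_le_sub_right (Finset.sum_le_sum fun a _ =>
      rootVal_mono m n _ _ fun v => h _) 1

lemma thetaCfg_mono {m n : ℕ} (Xs : (Fin n → Fin m) → ℕ) (u : (Fin n → Fin m) → Bool)
    {B B' : Finset (Fin n → Fin m)} (h : B ⊆ B') (v : Fin n → Fin m) :
    thetaCfg Xs u B v ≤ thetaCfg Xs u B' v := by
  unfold thetaCfg
  by_cases hv : v ∈ B
  · simp [hv, h hv]
  · by_cases hv' : v ∈ B'
    · simp only [if_neg hv, if_pos hv']
      split <;> simp
    · simp [hv, hv']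

lemma thetaCfg_congr {m n : ℕ} (Xs : (Fin n → Fin m) → ℕ) (u : (Fin n → Fin m) → Bool)
    {B B' : Finset (Fin n → Fin m)} {v : Fin n → Fin m} (h : v ∈ B ↔ v ∈ B') :
    thetaCfg Xs u B v = thetaCfg Xs u B' v := by
  unfold thetaCfg
  by_cases hv : v ∈ B
  · simp [hv, h.mp hv]
  · rw [if_neg hv, if_neg (fun hv' => hv (h.mpr hv'))]

lemma neg_one_pow_sub {a b : ℕ} (h : b ≤ a) : ((-1:ℝ))^(a-b) = (-1)^a * (-1)^b := by
  obtain ⟨c, rfl⟩ := Nat.exists_eq_add_of_le h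
  rw [Nat.add_sub_cancel_left, pow_add, mul_comm ((-1:ℝ)^b), mul_assoc, ← pow_add,
    ← two_mul, pow_mul, neg_one_sq, one_pow, mul_one]

lemma sum_sign_powerset {α : Type*} [DecidableEq α] {A : Finset α} (hA : A.Nonempty) :
    ∑ B ∈ A.powerset, (-1:ℝ)^(A.card - B.card) = 0 := by
  have h1 : ∀ B ∈ A.powerset, (-1:ℝ)^(A.card - B.card) = (-1)^A.card * (-1)^B.card :=
    fun B hB => neg_one_pow_sub (Finset.card_le_card (Finset.mem_powerset.mp hB))
  rw [Finset.sum_congr rfl h1, ← Finset.mul_sum]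
  have h2 : (∑ B ∈ A.powerset, ((-1:ℝ))^B.card)
      = ((∑ B ∈ A.powerset, ((-1:ℤ))^B.card : ℤ) : ℝ) := by push_cast; rfl
  rw [h2, Finset.sum_powerset_neg_one_pow_card_of_nonempty hA]
  simp

lemma rootVal_cast (m : ℕ) {n n' : ℕ} (h : n = n') (f : (Fin n → Fin m) → ℕ) :
    rootVal m n f = rootVal m n' (fun u => f (fun i => u (Fin.cast h i))) := by
  subst h; rfl

lemma rootVal_snoc_le (m k : ℕ) (G : (Fin (k+1) → Fin m) → ℕ) (a : Fin m) :
    rootVal m k (fun u => G (Fin.snoc u a)) ≤ rootVal m (k+1) G + 1 := by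
  have h : rootVal m k (fun u => G (Fin.snoc u a))
      ≤ ∑ b : Fin m, rootVal m k (fun u => G (Fin.snoc u b)) :=
    Finset.single_le_sum (f := fun b => rootVal m k (fun u => G (Fin.snoc u b)))
      (fun _ _ => Nat.zero_le _) (Finset.mem_univ a)
  simp only [rootVal]
  omega

lemma vertexVal_zero (m n : ℕ) (h0 : 0 ≤ n) (f : (Fin n → Fin m) → ℕ) (w : Fin 0 → Fin m) :
    vertexVal m n 0 h0 f w = rootVal m n f := by
  unfold vertexVal
  congr 1
  funext v
  congr 1
  funext i
  rw [dif_pos (by omega : (i:ℕ) < n - 0)]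
  exact congrArg v (Fin.ext rfl)

lemma vertexVal_succ_le (m n ℓ : ℕ) (hℓ : ℓ + 1 ≤ n) (f : (Fin n → Fin m) → ℕ)
    (w : Fin (ℓ+1) → Fin m) :
    vertexVal m n (ℓ+1) hℓ f w
      ≤ vertexVal m n ℓ (by omega) f (fun j => w j.succ) + 1 := by
  have hk : n - ℓ = (n - (ℓ+1)) + 1 := by omega
  unfold vertexVal
  rw [rootVal_cast m hk]
  refine le_trans (le_of_eq ?_) (rootVal_snoc_le m (n - (ℓ+1)) _ (w 0))
  apply congrArg
  funext v
  apply congrArg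
  funext i
  by_cases h1 : (i:ℕ) < n - (ℓ+1)
  · rw [dif_pos h1, dif_pos (by omega : (i:ℕ) < n - ℓ)]
    beta_reduce
    have : Fin.cast hk ⟨(i:ℕ), by omega⟩ = Fin.castSucc ⟨(i:ℕ), h1⟩ := by
      apply Fin.ext; simp
    rw [this, Fin.snoc_castSucc]
  · by_cases h2 : (i:ℕ) < n - ℓ
    · rw [dif_neg h1, dif_pos h2]
      beta_reduce
      have : Fin.cast hk ⟨(i:ℕ), by omega⟩ = Fin.last (n - (ℓ+1)) := by
        apply Fin.ext; simp; omega
      rw [this, Fin.snoc_last]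
      exact congrArg w (Fin.ext (by simp; omega))
    · rw [dif_neg h1, dif_neg h2]
      exact congrArg w (Fin.ext (by simp [Fin.succ]; omega))

lemma gen1Val_congr {m n : ℕ} (hn : 0 < n) {f f' : (Fin n → Fin m) → ℕ} (j : Fin m)
    (h : ∀ v : Fin n → Fin m, v ⟨n-1, by omega⟩ = j → f v = f' v) :
    gen1Val m n f j = gen1Val m n f' j := by
  unfold gen1Val
  apply congrArg
  funext v
  apply h
  simp

lemma gen1Val_mono {m n : ℕ} {f f' : (Fin n → Fin m) → ℕ} (j : Fin m)
    (h : ∀ v, f v ≤ f' v) : gen1Val m n f j ≤ gen1Val m n f' j :=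
  rootVal_mono m _ _ _ fun v => h _

lemma rootVal_eq_sum_gen1 {m n : ℕ} (hn : 0 < n) (f : (Fin n → Fin m) → ℕ) :
    rootVal m n f = (∑ j, gen1Val m n f j) - 1 := by
  obtain ⟨n', rfl⟩ : ∃ n', n = n' + 1 := ⟨n - 1, by omega⟩
  show (∑ a : Fin m, rootVal m n' (fun w => f (Fin.snoc w a))) - 1 = _
  congr 1

set_option maxHeartbeats 2000000 in
theorem part3 {m n : ℕ} (hn0 : 0 < n) (i : ℕ) (Xs : (Fin n → Fin m) → ℕ)
    (u : (Fin n → Fin m) → Bool) (A : Finset (Fin n → Fin m))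
    (hnabla : nablaCfg Xs u A
      (fun g => if rootVal m n g = i then (1 : ℝ) else 0) ≠ 0) :
    ∃ x : Fin m → ℕ, (∑ j, x j) - 1 = i ∧
      ∀ j : Fin m,
        nablaCfg Xs u (A.filter (fun v => v ⟨n - 1, by omega⟩ = j))
          (fun g => if gen1Val m n g j = x j then (1 : ℝ) else 0) ≠ 0 := by
  classical
  have hlt : n - 1 < n := by omega
  have hg_le : ∀ B ⊆ A, ∀ j, gen1Val m n (thetaCfg Xs u B) j
      ≤ gen1Val m n (thetaCfg Xs u A) j :=
    fun B hB j => gen1Val_mono j (thetaCfg_mono Xs u hB)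
  have hg_congr : ∀ (B B' : Finset (Fin n → Fin m)) (j : Fin m),
      (∀ v : Fin n → Fin m, v ⟨n - 1, hlt⟩ = j → (v ∈ B ↔ v ∈ B')) →
      gen1Val m n (thetaCfg Xs u B) j = gen1Val m n (thetaCfg Xs u B') j :=
    fun B B' j h => gen1Val_congr hn0 j fun v hv => thetaCfg_congr Xs u (h v hv)
  have hrootB : ∀ B : Finset (Fin n → Fin m),
      rootVal m n (thetaCfg Xs u B) = (∑ j, gen1Val m n (thetaCfg Xs u B) j) - 1 :=
    fun B => rootVal_eq_sum_gen1 hn0 _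
  set T : Finset (Fin m → ℕ) :=
    (Fintype.piFinset fun j => Finset.range (gen1Val m n (thetaCfg Xs u A) j + 1)).filter
      (fun x => (∑ j, x j) - 1 = i) with hT
  have stepA : ∀ B ∈ A.powerset,
      (if rootVal m n (thetaCfg Xs u B) = i then (1:ℝ) else 0)
        = ∑ x ∈ T, ∏ j, (if gen1Val m n (thetaCfg Xs u B) j = x j then (1:ℝ) else 0) := by
    intro B hB
    have h1 : ∀ x : Fin m → ℕ,
        (∏ j, (if gen1Val m n (thetaCfg Xs u B) j = x j then (1:ℝ) else 0))
          = if x = (fun j => gen1Val m n (thetaCfg Xs u B) j) then (1:ℝ) else 0 := by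
      intro x
      by_cases hxg : x = fun j => gen1Val m n (thetaCfg Xs u B) j
      · rw [if_pos hxg, hxg]
        simp
      · rw [if_neg hxg]
        rw [funext_iff] at hxg
        push_neg at hxg
        obtain ⟨j, hj⟩ := hxg
        exact Finset.prod_eq_zero (Finset.mem_univ j) (if_neg fun h => hj h.symm)
    rw [Finset.sum_congr rfl fun x _ => h1 x,
      Finset.sum_ite_eq' T (fun j => gen1Val m n (thetaCfg Xs u B) j) (fun _ => (1:ℝ))]
    have hmem : ((fun j => gen1Val m n (thetaCfg Xs u B) j) ∈ T)
        ↔ rootVal m n (thetaCfg Xs u B) = i := by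
      rw [hT]
      simp only [Finset.mem_filter, Fintype.mem_piFinset, Finset.mem_range, Nat.lt_succ_iff]
      rw [hrootB B]
      exact ⟨fun h => h.2, fun h => ⟨fun j => hg_le B (Finset.mem_powerset.mp hB) j, h⟩⟩
    rw [if_congr hmem rfl rfl]
  have key : nablaCfg Xs u A (fun g => if rootVal m n g = i then (1:ℝ) else 0)
      = ∑ x ∈ T, ∏ j : Fin m,
          nablaCfg Xs u (A.filter (fun v => v ⟨n - 1, hlt⟩ = j))
            (fun g => if gen1Val m n g j = x j then (1:ℝ) else 0) := by
    simp only [nablaCfg]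
    rw [Finset.sum_congr rfl (fun B hB => by
      rw [stepA B hB, Finset.mul_sum])]
    rw [Finset.sum_comm]
    refine Finset.sum_congr rfl fun x hx => ?_
    rw [Finset.prod_univ_sum]
    refine Finset.sum_nbij'
      (i := fun B => fun j => B.filter (fun v => v ⟨n - 1, hlt⟩ = j))
      (j := fun p => Finset.univ.biUnion p) ?_ ?_ ?_ ?_ ?_
    · intro B hB
      rw [Fintype.mem_piFinset]
      intro j
      rw [Finset.mem_powerset]
      exact Finset.filter_subset_filter _ (Finset.mem_powerset.mp hB)
    · intro p hp
      rw [Finset.mem_powerset]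
      intro v hv
      rw [Finset.mem_biUnion] at hv
      obtain ⟨j, -, hv⟩ := hv
      have := Finset.mem_powerset.mp (Fintype.mem_piFinset.mp hp j) hv
      exact (Finset.mem_filter.mp this).1
    · intro B hB
      ext v
      simp only [Finset.mem_biUnion, Finset.mem_filter, Finset.mem_univ, true_and]
      exact ⟨fun ⟨j, h, _⟩ => h, fun h => ⟨v ⟨n - 1, hlt⟩, h, rfl⟩⟩
    · intro p hp
      funext j
      ext v
      simp only [Finset.mem_filter, Finset.mem_biUnion, Finset.mem_univ, true_and]
      constructor
      · rintro ⟨⟨j', hj'⟩, hvj⟩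
        have hv' := Finset.mem_powerset.mp (Fintype.mem_piFinset.mp hp j') hj'
        have : v ⟨n - 1, hlt⟩ = j' := (Finset.mem_filter.mp hv').2
        have hjj : j' = j := by rw [← this]; exact hvj
        rwa [hjj] at hj'
      · intro hv
        have hv' := Finset.mem_powerset.mp (Fintype.mem_piFinset.mp hp j) hv
        exact ⟨⟨j, hv⟩, (Finset.mem_filter.mp hv').2⟩
    · intro B hB
      have hBA := Finset.mem_powerset.mp hB
      rw [Finset.prod_mul_distrib]
      have hsign : (∏ j : Fin m, (-1:ℝ)^((A.filter (fun v => v ⟨n - 1, hlt⟩ = j)).card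
              - (B.filter (fun v => v ⟨n - 1, hlt⟩ = j)).card))
          = (-1:ℝ)^(A.card - B.card) := by
        have hAcard : A.card = ∑ j : Fin m,
            (A.filter (fun v => v ⟨n - 1, hlt⟩ = j)).card :=
          Finset.card_eq_sum_card_fiberwise
            (f := fun (v : Fin n → Fin m) => v ⟨n - 1, hlt⟩) (fun v _ => Finset.mem_univ _)
        have hBcard : B.card = ∑ j : Fin m,
            (B.filter (fun v => v ⟨n - 1, hlt⟩ = j)).card :=
          Finset.card_eq_sum_card_fiberwise
            (f := fun (v : Fin n → Fin m) => v ⟨n - 1, hlt⟩) (fun v _ => Finset.mem_univ _)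
        rw [Finset.prod_congr rfl (fun j _ => neg_one_pow_sub
          (Finset.card_le_card (Finset.filter_subset_filter _ hBA))),
          Finset.prod_mul_distrib, Finset.prod_pow_eq_pow_sum, Finset.prod_pow_eq_pow_sum,
          ← hAcard, ← hBcard, neg_one_pow_sub (Finset.card_le_card hBA)]
      have hind : (∏ j : Fin m, (if gen1Val m n (thetaCfg Xs u B) j = x j then (1:ℝ) else 0))
          = ∏ j : Fin m, (if gen1Val m n (thetaCfg Xs u
              (B.filter (fun v => v ⟨n - 1, hlt⟩ = j))) j = x j then (1:ℝ) else 0) := by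
        refine Finset.prod_congr rfl fun j _ => ?_
        rw [hg_congr B (B.filter (fun v => v ⟨n - 1, hlt⟩ = j)) j
          (fun v hv => by simp [Finset.mem_filter, hv])]
      rw [hsign, hind]
  rw [key] at hnabla
  obtain ⟨x, hxT, hxne⟩ := Finset.exists_ne_zero_of_sum_ne_zero hnabla
  rw [hT, Finset.mem_filter] at hxT
  exact ⟨x, hxT.2, fun j => Finset.prod_ne_zero_iff.mp hxne j (Finset.mem_univ j)⟩


open scoped Classical in
/-- Lemma 3.3. On the event `∇^A 1_{X(e_n)=i} ≠ 0`:
(1) `X(w) ≤ |w| + i` for every word `w` of length `≤ n`;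
(2) `Θ^A X(e_n) ≥ max(i,1)`;
(3) there are `x_1,…,x_m ≥ 0` with `(x_1+⋯+x_m-1)⁺ = i` and
`∇^{A_j} 1_{X(j)=x_j} ≠ 0` for each `j`, where `A_j` is the set of members of `A`
with last letter `j`. -/
theorem nabla_nonzero_consequences
    (m : ℕ) (hm : 2 ≤ m) (n : ℕ) (hn : 1 ≤ n) (i : ℕ)
    (Xs : (Fin n → Fin m) → ℕ) (hXs : ∀ v, 1 ≤ Xs v)
    (u : (Fin n → Fin m) → Bool)
    (A : Finset (Fin n → Fin m)) (hA : A.Nonempty)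
    (hnabla : nablaCfg Xs u A
      (fun g => if rootVal m n g = i then (1 : ℝ) else 0) ≠ 0) :
    (∀ ℓ : ℕ, ∀ hℓ : ℓ ≤ n, ∀ w : Fin ℓ → Fin m,
        vertexVal m n ℓ hℓ (fun v => if u v then Xs v else 0) w ≤ ℓ + i) ∧
    max i 1 ≤ rootVal m n (thetaCfg Xs u A) ∧
    ∃ x : Fin m → ℕ, (∑ j, x j) - 1 = i ∧
      ∀ j : Fin m,
        nablaCfg Xs u (A.filter (fun v => v ⟨n - 1, by omega⟩ = j))
          (fun g => if gen1Val m n g j = x j then (1 : ℝ) else 0) ≠ 0 := by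
  classical
  have hn0 : 0 < n := hn
  have hroot_mono : ∀ {B B' : Finset (Fin n → Fin m)}, B ⊆ B' →
      rootVal m n (thetaCfg Xs u B) ≤ rootVal m n (thetaCfg Xs u B') :=
    fun h => rootVal_mono m n _ _ (thetaCfg_mono Xs u h)
  have hex : ∃ B ∈ A.powerset, rootVal m n (thetaCfg Xs u B) = i := by
    by_contra hc
    push_neg at hc
    refine hnabla ?_
    unfold nablaCfg
    exact Finset.sum_eq_zero fun B hB => by beta_reduce; rw [if_neg (hc B hB), mul_zero]
  obtain ⟨B0, hB0, hB0i⟩ := hex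
  refine ⟨?_, ?_, ?_⟩
  · -- Part 1
    have hempty : thetaCfg Xs u (∅ : Finset (Fin n → Fin m))
        = fun v => if u v then Xs v else 0 := by
      funext v; simp [thetaCfg]
    have hroot0 : rootVal m n (fun v => if u v then Xs v else 0) ≤ i := by
      rw [← hempty, ← hB0i]
      exact hroot_mono (Finset.empty_subset B0)
    intro ℓ
    induction ℓ with
    | zero =>
      intro hℓ w
      rw [vertexVal_zero]
      simpa using hroot0
    | succ ℓ ih =>
      intro hℓ w
      calc vertexVal m n (ℓ+1) hℓ (fun v => if u v then Xs v else 0) w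
          ≤ vertexVal m n ℓ (by omega) (fun v => if u v then Xs v else 0)
              (fun j => w j.succ) + 1 := vertexVal_succ_le m n ℓ hℓ _ w
        _ ≤ (ℓ + i) + 1 := by
            exact Nat.add_le_add_right (ih (by omega) _) 1
        _ = (ℓ + 1) + i := by omega
  · -- Part 2
    have h1 : i ≤ rootVal m n (thetaCfg Xs u A) :=
      hB0i ▸ hroot_mono (Finset.mem_powerset.mp hB0)
    have h2 : 1 ≤ rootVal m n (thetaCfg Xs u A) := by
      by_contra h0
      have hRA0 : rootVal m n (thetaCfg Xs u A) = 0 := by omega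
      refine hnabla ?_
      unfold nablaCfg
      have hc : ∀ B ∈ A.powerset,
          (-1:ℝ)^(A.card - B.card)
              * (if rootVal m n (thetaCfg Xs u B) = i then (1:ℝ) else 0)
            = (-1:ℝ)^(A.card - B.card) * (if 0 = i then (1:ℝ) else 0) := by
        intro B hB
        have h00 : rootVal m n (thetaCfg Xs u B) = 0 :=
          Nat.le_zero.mp (hRA0 ▸ hroot_mono (Finset.mem_powerset.mp hB))
        beta_reduce
        rw [h00]
      rw [Finset.sum_congr rfl hc, ← Finset.sum_mul, sum_sign_powerset hA, zero_mul]
    simp only [max_le_iff]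
    exact ⟨h1, h2⟩
  · -- Part 3
    exact part3 hn0 i Xs u A hnabla
end
end
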